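/- arXiv:2002.03548 — 11 statements merged into one kernel-verified Lean document; each statement's English description precedes it below -/
import Mathlib

section
/- Let m ≥ 1 and let S = (s_{ij}) be an m×m real matrix that is skew-symmetric (s_{ji} = −s_{ij} for all i, j) and satisfies s_{ij} ≥ 0 whenever i < j. Then ∑_{i=1}^m ∑_{j=i+1}^m s_{ij} ≤ 2^{m−1} · ∑_{i=1}^m |∑_{j=1}^m s_{ij}|. -/
theorem aux_lemma85 (m : ℕ) (s : Fin m → Fin m → ℝ)
    (hskew : ∀ i j : Fin m, s j i = - s i j)
    (hnn : ∀ i j : Fin m, i < j → 0 ≤ s i j) :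
    ∀ A : Finset (Fin m),
      ∑ i ∈ A, ∑ j ∈ A.filter (i < ·), s i j ≤
        (2 : ℝ) ^ (A.card - 1) * ∑ i ∈ A, |∑ j ∈ A, s i j| := by
  intro A
  induction A using Finset.strongInduction with
  | _ A ih =>
    rcases A.eq_empty_or_nonempty with rfl | hA
    · simp
    set a := A.min' hA with ha
    have haA : a ∈ A := A.min'_mem hA
    set B := A.erase a with hB
    have hBA : B ⊂ A := Finset.erase_ssubset haA
    have haB : a ∉ B := Finset.notMem_erase a A
    have hins : A = insert a B := (Finset.insert_erase haA).symm
    have hab : ∀ b ∈ B, a < b := fun b hb =>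
      lt_of_le_of_ne (A.min'_le b (Finset.mem_of_mem_erase hb))
        (Ne.symm (Finset.ne_of_mem_erase hb))
    -- filter identities
    have hfa : A.filter (a < ·) = B := by
      ext j
      simp only [Finset.mem_filter, hB, Finset.mem_erase]
      constructor
      · rintro ⟨hj, hlt⟩; exact ⟨ne_of_gt hlt, hj⟩
      · rintro ⟨hne, hj⟩; exact ⟨hj, lt_of_le_of_ne (A.min'_le j hj) (Ne.symm hne)⟩
    have hfi : ∀ i ∈ B, A.filter (i < ·) = B.filter (i < ·) := by
      intro i hi
      ext j
      simp only [Finset.mem_filter, hB, Finset.mem_erase]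
      constructor
      · rintro ⟨hj, hlt⟩
        refine ⟨⟨?_, hj⟩, hlt⟩
        rintro rfl
        exact absurd (hab i hi) (not_lt_of_gt hlt)
      · rintro ⟨⟨_, hj⟩, hlt⟩; exact ⟨hj, hlt⟩
    have hsaa : s a a = 0 := by
      have := hskew a a; linarith
    have hPa_nn : 0 ≤ ∑ j ∈ B, s a j :=
      Finset.sum_nonneg fun j hj => hnn a j (hab j hj)
    have hRa : |∑ j ∈ A, s a j| = ∑ j ∈ B, s a j := by
      rw [hins, Finset.sum_insert haB, hsaa, zero_add, abs_of_nonneg hPa_nn]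
    -- split LHS
    have hLHS : ∑ i ∈ A, ∑ j ∈ A.filter (i < ·), s i j =
        (∑ j ∈ B, s a j) + ∑ i ∈ B, ∑ j ∈ B.filter (i < ·), s i j := by
      rw [hins, Finset.sum_insert haB, ← hins, hfa]
      congr 1
      exact Finset.sum_congr rfl fun i hi => by rw [hfi i hi]
    rcases B.eq_empty_or_nonempty with hBe | hBne
    · rw [hLHS, hBe]
      simp only [Finset.sum_empty, add_zero]
      have : (0:ℝ) ≤ (2 : ℝ) ^ (A.card - 1) * ∑ i ∈ A, |∑ j ∈ A, s i j| := by
        apply mul_nonneg (by positivity)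
        exact Finset.sum_nonneg fun i _ => abs_nonneg _
      linarith
    -- B nonempty
    have hk1 : 1 ≤ B.card := Finset.card_pos.mpr hBne
    have hcard : A.card = B.card + 1 := by
      rw [hins, Finset.card_insert_of_notMem haB]
    have hIH := ih B hBA
    -- row sums over B vs over A
    have hrow : ∀ i ∈ B, |∑ j ∈ B, s i j| ≤ |∑ j ∈ A, s i j| + s a i := by
      intro i hi
      have hRi : ∑ j ∈ A, s i j = - s a i + ∑ j ∈ B, s i j := by
        rw [hins, Finset.sum_insert haB, hskew a i]
      have hnni : 0 ≤ s a i := hnn a i (hab i hi)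
      rw [hRi]
      rw [abs_le]
      constructor
      · have := neg_abs_le (-s a i + ∑ j ∈ B, s i j)
        have h2 := abs_add_le (-s a i + ∑ j ∈ B, s i j) (s a i)
        have h3 := abs_of_nonneg hnni
        have h4 := le_abs_self (-s a i + ∑ j ∈ B, s i j)
        nlinarith [abs_nonneg (-s a i + ∑ j ∈ B, s i j)]
      · nlinarith [le_abs_self (-s a i + ∑ j ∈ B, s i j),
          neg_abs_le (-s a i + ∑ j ∈ B, s i j)]
    have hrowsum : ∑ i ∈ B, |∑ j ∈ B, s i j| ≤
        (∑ i ∈ B, |∑ j ∈ A, s i j|) + ∑ j ∈ B, s a j := by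
      calc ∑ i ∈ B, |∑ j ∈ B, s i j|
          ≤ ∑ i ∈ B, (|∑ j ∈ A, s i j| + s a i) := Finset.sum_le_sum hrow
        _ = (∑ i ∈ B, |∑ j ∈ A, s i j|) + ∑ j ∈ B, s a j := by
            rw [Finset.sum_add_distrib]
    -- combine
    set Pa := ∑ j ∈ B, s a j with hPa
    set SB := ∑ i ∈ B, |∑ j ∈ A, s i j| with hSB
    have hSB_nn : 0 ≤ SB := Finset.sum_nonneg fun i _ => abs_nonneg _
    have hRHS : (2 : ℝ) ^ (A.card - 1) * ∑ i ∈ A, |∑ j ∈ A, s i j| =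
        (2 : ℝ) ^ B.card * (Pa + SB) := by
      rw [hins, Finset.sum_insert haB, ← hins, hRa, hcard]
      norm_num
      rfl
    have hpow : (2 : ℝ) ^ (B.card - 1) * 2 = (2 : ℝ) ^ B.card := by
      rw [← pow_succ]
      congr 1
      omega
    have hpow1 : (1 : ℝ) ≤ (2 : ℝ) ^ (B.card - 1) := one_le_pow₀ (by norm_num)
    have hchain : ∑ i ∈ A, ∑ j ∈ A.filter (i < ·), s i j ≤
        Pa + (2 : ℝ) ^ (B.card - 1) * (SB + Pa) := by
      rw [hLHS]
      have h1 : ∑ i ∈ B, ∑ j ∈ B.filter (i < ·), s i j ≤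
          (2 : ℝ) ^ (B.card - 1) * (SB + Pa) := by
        calc ∑ i ∈ B, ∑ j ∈ B.filter (i < ·), s i j
            ≤ (2 : ℝ) ^ (B.card - 1) * ∑ i ∈ B, |∑ j ∈ B, s i j| := hIH
          _ ≤ (2 : ℝ) ^ (B.card - 1) * (SB + Pa) := by
              apply mul_le_mul_of_nonneg_left hrowsum (by positivity)
      linarith
    rw [hRHS]
    have : Pa + (2 : ℝ) ^ (B.card - 1) * (SB + Pa) ≤ (2 : ℝ) ^ B.card * (Pa + SB) := by
      nlinarith [hpow, hpow1, hPa_nn, hSB_nn]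
    linarith

/-- Lemma 8.5: for a skew-symmetric real `m × m` matrix `s` with nonnegative
entries above the diagonal, the sum of the entries above the diagonal is bounded
by `2^(m-1)` times the `ℓ¹`-norm of the row sums. -/
theorem stmt_0 (m : ℕ) (hm : 1 ≤ m) (s : Fin m → Fin m → ℝ)
    (hskew : ∀ i j : Fin m, s j i = - s i j)
    (hnn : ∀ i j : Fin m, i < j → 0 ≤ s i j) :
    ∑ i : Fin m, ∑ j ∈ Finset.Ioi i, s i j ≤
      (2 : ℝ) ^ (m - 1) * ∑ i : Fin m, |∑ j : Fin m, s i j| := by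
  have h := aux_lemma85 m s hskew hnn Finset.univ
  have hfilt : ∀ i : Fin m, Finset.univ.filter (i < ·) = Finset.Ioi i := by
    intro i; ext j; simp
  simp only [hfilt, Finset.card_univ, Fintype.card_fin] at h
  exact h
end

section
/- Let m ≥ 1 and let S = (s_{ij}) be an m×m real matrix that is skew-symmetric (s_{ji} = −s_{ij} for all i, j) and satisfies s_{ij} ≥ 0 whenever i < j. Then for every k with 1 ≤ k ≤ m one has ∑_{i=1}^k ∑_{j=i+1}^m s_{ij} ≤ 2^{k−1} · ∑_{i=1}^k |∑_{j=1}^m s_{ij}|. -/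
open Finset

private lemma aux85 (m : ℕ) (s : Fin m → Fin m → ℝ)
    (hskew : ∀ i j : Fin m, s j i = - s i j)
    (hnn : ∀ i j : Fin m, i < j → 0 ≤ s i j) :
    ∀ k : ℕ, 1 ≤ k → k ≤ m →
    ∑ i ∈ Finset.univ.filter (fun i : Fin m => (i : ℕ) < k),
        ∑ j ∈ Finset.Ioi i, s i j ≤
      (2 : ℝ) ^ (k - 1) *
        ∑ i ∈ Finset.univ.filter (fun i : Fin m => (i : ℕ) < k),
          |∑ j : Fin m, s i j| := by
  have sdiag : ∀ i : Fin m, s i i = 0 := by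
    intro i; have := hskew i i; linarith
  -- row identity
  have row : ∀ t : Fin m,
      ∑ j ∈ Finset.Ioi t, s t j = (∑ j : Fin m, s t j) + ∑ j ∈ Finset.Iio t, s j t := by
    intro t
    have h1 : (Finset.univ : Finset (Fin m)) = Finset.Iio t ∪ Finset.Ici t := by
      ext j
      simp only [Finset.mem_univ, Finset.mem_union, Finset.mem_Iio, Finset.mem_Ici, true_iff]
      exact lt_or_ge j t
    have hdisj : Disjoint (Finset.Iio t) (Finset.Ici t) := by
      simp only [Finset.disjoint_left, Finset.mem_Iio, Finset.mem_Ici]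
      intro a ha; exact not_le.mpr ha
    have h2 : (∑ j : Fin m, s t j)
        = ∑ j ∈ Finset.Iio t, s t j + ∑ j ∈ Finset.Ici t, s t j := by
      rw [h1, Finset.sum_union hdisj]
    have h3 : ∑ j ∈ Finset.Ici t, s t j = s t t + ∑ j ∈ Finset.Ioi t, s t j := by
      rw [← Finset.Ioi_insert, Finset.sum_insert (by simp)]
    have h4 : ∑ j ∈ Finset.Iio t, s t j = - ∑ j ∈ Finset.Iio t, s j t := by
      rw [← Finset.sum_neg_distrib]
      exact Finset.sum_congr rfl fun j _ => by rw [← hskew]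
    rw [h2, h3, sdiag, h4]; ring
  intro k
  induction k with
  | zero => omega
  | succ n ih =>
    intro _ hkm
    rcases Nat.eq_zero_or_pos n with hn0 | hn1
    · subst hn0
      have h0 : (0 : ℕ) < m := by omega
      have hfilt : Finset.univ.filter (fun i : Fin m => (i : ℕ) < 1) = {⟨0, h0⟩} := by
        ext i; simp [Fin.ext_iff, Nat.lt_one_iff]
      have hb : ∑ j ∈ Finset.Ioi (⟨0, h0⟩ : Fin m), s ⟨0, h0⟩ j
          ≤ |∑ j : Fin m, s ⟨0, h0⟩ j| := by
        rw [row]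
        have hIe : Finset.Iio (⟨0, h0⟩ : Fin m) = ∅ := by
          ext j; simp [Fin.lt_def]
        rw [hIe, Finset.sum_empty, add_zero]
        exact le_abs_self _
      rw [hfilt]
      simpa using hb
    · -- inductive step
      obtain ⟨p, rfl⟩ : ∃ p, n = p + 1 := ⟨n - 1, (Nat.succ_pred_eq_of_pos hn1).symm⟩
      set n := p + 1 with hn
      have hnm : n < m := by omega
      set t : Fin m := ⟨n, hnm⟩ with ht
      have hfilt : Finset.univ.filter (fun i : Fin m => (i : ℕ) < n + 1)
          = insert t (Finset.univ.filter (fun i : Fin m => (i : ℕ) < n)) := by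
        ext i; simp only [Finset.mem_filter, Finset.mem_univ, true_and, Finset.mem_insert, Fin.ext_iff, ht, Fin.val_mk]; omega
      have htni : t ∉ Finset.univ.filter (fun i : Fin m => (i : ℕ) < n) := by
        simp only [Finset.mem_filter, Finset.mem_univ, true_and, not_lt]; exact le_refl _
      have hIio : Finset.Iio t = Finset.univ.filter (fun i : Fin m => (i : ℕ) < n) := by
        ext i; simp only [Finset.mem_Iio, Finset.mem_filter, Finset.mem_univ, true_and, Fin.lt_def]; exact Iff.rfl
      have ihn := ih (by omega) (by omega)
      set A := ∑ i ∈ Finset.univ.filter (fun i : Fin m => (i : ℕ) < n),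
          ∑ j ∈ Finset.Ioi i, s i j with hA
      set B := ∑ i ∈ Finset.univ.filter (fun i : Fin m => (i : ℕ) < n),
          |∑ j : Fin m, s i j| with hB
      have key : ∑ j ∈ Finset.Iio t, s j t ≤ A := by
        rw [hIio, hA]
        apply Finset.sum_le_sum
        intro i hi
        simp only [Finset.mem_filter] at hi
        have hit : i < t := by rw [Fin.lt_def]; exact hi.2
        exact Finset.single_le_sum (f := fun j => s i j)
          (fun j hj => hnn i j (Finset.mem_Ioi.mp hj)) (Finset.mem_Ioi.mpr hit)
      have hAnn : 0 ≤ A := by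
        apply Finset.sum_nonneg; intro i _
        exact Finset.sum_nonneg fun j hj => hnn i j (Finset.mem_Ioi.mp hj)
      have hstep : ∑ j ∈ Finset.Ioi t, s t j ≤ |∑ j : Fin m, s t j| + A := by
        rw [row t]
        have := le_abs_self (∑ j : Fin m, s t j)
        linarith
      have hBnn : 0 ≤ B := Finset.sum_nonneg fun i _ => abs_nonneg _
      rw [hfilt, Finset.sum_insert htni, Finset.sum_insert htni]
      have hexp : n + 1 - 1 = p + 1 := by omega
      have hexp' : n - 1 = p := by omega
      rw [hexp]
      rw [hexp'] at ihn
      calc (∑ j ∈ Finset.Ioi t, s t j) + A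
          ≤ (|∑ j : Fin m, s t j| + A) + A := by linarith
        _ ≤ (2:ℝ)^(p+1) * |∑ j : Fin m, s t j| + 2 * ((2:ℝ)^p * B) := by
            have h1 : (1:ℝ) ≤ (2:ℝ)^(p+1) := one_le_pow₀ (by norm_num)
            nlinarith [abs_nonneg (∑ j : Fin m, s t j)]
        _ = (2:ℝ)^(p+1) * (|∑ j : Fin m, s t j| + B) := by rw [pow_succ]; ring

/-- The inductive intermediate claim in the proof of Lemma 8.5: for a
skew-symmetric real `m × m` matrix `s` with nonnegative entries above the
diagonal and any `1 ≤ k ≤ m`,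
`∑_{i=1}^k ∑_{j=i+1}^m s i j ≤ 2^(k-1) ∑_{i=1}^k |∑_{j=1}^m s i j|`. -/
theorem stmt_1 (m : ℕ) (hm : 1 ≤ m) (s : Fin m → Fin m → ℝ)
    (hskew : ∀ i j : Fin m, s j i = - s i j)
    (hnn : ∀ i j : Fin m, i < j → 0 ≤ s i j)
    (k : ℕ) (hk1 : 1 ≤ k) (hkm : k ≤ m) :
    ∑ i ∈ Finset.univ.filter (fun i : Fin m => (i : ℕ) < k),
        ∑ j ∈ Finset.Ioi i, s i j ≤
      (2 : ℝ) ^ (k - 1) *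
        ∑ i ∈ Finset.univ.filter (fun i : Fin m => (i : ℕ) < k),
          |∑ j : Fin m, s i j| := by
  exact aux85 m s hskew hnn k hk1 hkm
end

section
/- For every m ≥ 1 there exists a constant C ≥ 0, depending only on m, with the following property: for all positive real numbers u_1, …, u_m and all nonnegative real numbers x_{ij} (1 ≤ i, j ≤ m) satisfying ∑_{j=1}^m (u_j · x_{ij} − u_i · x_{ji}) = 0 for every i ∈ {1, …, m}, one has ∑_{i=1}^m ∑_{j=1}^m (u_i − u_j) · x_{ij} ≤ C · ∑_{i=1}^m |∑_{j=1}^m (u_i · x_{ij} − u_j · x_{ji})|. -/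
open Finset

/-- A double sum of an antisymmetric function over the same index set vanishes. -/
lemma antisym_inner {m : ℕ} (I : Finset (Fin m)) (F : Fin m → Fin m → ℝ)
    (hF : ∀ i j, F j i = - F i j) :
    ∑ i ∈ I, ∑ j ∈ I, F i j = 0 := by
  have h1 : ∑ i ∈ I, ∑ j ∈ I, F i j = ∑ j ∈ I, ∑ i ∈ I, F i j := Finset.sum_comm
  have h2 : ∑ j ∈ I, ∑ i ∈ I, F i j = - ∑ j ∈ I, ∑ i ∈ I, F j i := by
    rw [← Finset.sum_neg_distrib]
    refine Finset.sum_congr rfl fun j _ => ?_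
    rw [← Finset.sum_neg_distrib]
    exact Finset.sum_congr rfl fun i _ => hF j i
  linarith [h1, h2]

/-- Boundary identity: for an antisymmetric `F`, summing `∑ j, F i j` over `i ∈ I`
equals the sum over the "boundary" pairs. -/
lemma antisym_boundary {m : ℕ} (p : Fin m → Prop) [DecidablePred p]
    (F : Fin m → Fin m → ℝ) (hF : ∀ i j, F j i = - F i j) :
    ∑ i ∈ univ.filter p, ∑ j : Fin m, F i j
      = ∑ i ∈ univ.filter p, ∑ j ∈ univ.filter (fun j => ¬ p j), F i j := by
  have hsplit : ∀ i : Fin m, ∑ j : Fin m, F i j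
      = ∑ j ∈ univ.filter p, F i j + ∑ j ∈ univ.filter (fun j => ¬ p j), F i j := by
    intro i
    rw [Finset.sum_filter_add_sum_filter_not]
  rw [Finset.sum_congr rfl (fun i _ => hsplit i), Finset.sum_add_distrib,
    antisym_inner (univ.filter p) F hF, zero_add]

/-- Symmetrization of a double sum. -/
lemma pair_split {m : ℕ} (f : Fin m → Fin m → ℝ) :
    ∑ i : Fin m, ∑ j : Fin m, f i j
      = ∑ i : Fin m, ∑ j : Fin m,
          (if i < j then f i j + f j i else if i = j then f i j else 0) := by
  have tri : ∀ i j : Fin m, f i j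
      = (if i < j then f i j else 0) + (if i = j then f i j else 0)
        + (if j < i then f i j else 0) := by
    intro i j
    rcases lt_trichotomy i j with h | h | h
    · simp [h, h.ne, h.not_gt]
    · simp [h, lt_irrefl]
    · simp [h, h.ne', h.not_gt]
  calc ∑ i : Fin m, ∑ j : Fin m, f i j
      = ∑ i : Fin m, ∑ j : Fin m,
          ((if i < j then f i j else 0) + (if i = j then f i j else 0)
            + (if j < i then f i j else 0)) := by
        exact Finset.sum_congr rfl fun i _ => Finset.sum_congr rfl fun j _ => tri i j
    _ = (∑ i : Fin m, ∑ j : Fin m, (if i < j then f i j else 0))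
        + (∑ i : Fin m, ∑ j : Fin m, (if i = j then f i j else 0))
        + (∑ i : Fin m, ∑ j : Fin m, (if j < i then f i j else 0)) := by
        have inner : ∀ i : Fin m, ∑ j : Fin m,
            ((if i < j then f i j else 0) + (if i = j then f i j else 0)
              + (if j < i then f i j else 0))
            = (∑ j : Fin m, (if i < j then f i j else 0))
              + (∑ j : Fin m, (if i = j then f i j else 0))
              + (∑ j : Fin m, (if j < i then f i j else 0)) := fun i => by
          rw [Finset.sum_add_distrib, Finset.sum_add_distrib]
        rw [Finset.sum_congr rfl (fun i _ => inner i), Finset.sum_add_distrib,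
          Finset.sum_add_distrib]
    _ = (∑ i : Fin m, ∑ j : Fin m, (if i < j then f i j else 0))
        + (∑ i : Fin m, ∑ j : Fin m, (if i = j then f i j else 0))
        + (∑ i : Fin m, ∑ j : Fin m, (if i < j then f j i else 0)) := by
        congr 1
        exact Finset.sum_comm
    _ = ∑ i : Fin m, ∑ j : Fin m,
          (if i < j then f i j + f j i else if i = j then f i j else 0) := by
        have termwise : ∀ i j : Fin m,
            (if i < j then f i j + f j i else if i = j then f i j else 0)
            = (if i < j then f i j else 0) + (if i = j then f i j else 0)
              + (if i < j then f j i else 0) := by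
          intro i j
          rcases lt_trichotomy i j with h | h | h
          · simp [h, h.ne]
          · simp [h, lt_irrefl]
          · simp [h, h.ne', h.not_gt]
        have inner2 : ∀ i : Fin m, ∑ j : Fin m,
            (if i < j then f i j + f j i else if i = j then f i j else 0)
            = (∑ j : Fin m, (if i < j then f i j else 0))
              + (∑ j : Fin m, (if i = j then f i j else 0))
              + (∑ j : Fin m, (if i < j then f j i else 0)) := fun i => by
          rw [Finset.sum_congr rfl (fun j _ => termwise i j), Finset.sum_add_distrib,
            Finset.sum_add_distrib]
        rw [Finset.sum_congr rfl (fun i _ => inner2 i), Finset.sum_add_distrib,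
          Finset.sum_add_distrib]

/-- The sorted case of the key inequality. -/
lemma sorted_case (m : ℕ) (u : Fin m → ℝ) (hu : ∀ i j : Fin m, i ≤ j → u j ≤ u i)
    (x : Fin m → Fin m → ℝ) (hx : ∀ i j, 0 ≤ x i j)
    (h : ∀ i : Fin m, ∑ j : Fin m, (u j * x i j - u i * x j i) = 0) :
    ∑ i : Fin m, ∑ j : Fin m, (u i - u j) * x i j ≤
      (m : ℝ) * ∑ i : Fin m, |∑ j : Fin m, (u i * x i j - u j * x j i)| := by
  set B : Fin m → ℝ := fun i => ∑ j : Fin m, (u i * x i j - u j * x j i) with hB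
  -- Step A: for each level ℓ, the boundary sum is at most ∑ |B i|.
  have stepA : ∀ ℓ : ℕ,
      ∑ i ∈ univ.filter (fun i : Fin m => (i : ℕ) ≤ ℓ),
        ∑ j ∈ univ.filter (fun j : Fin m => ¬ (j : ℕ) ≤ ℓ),
          (u i - u j) * (x i j + x j i)
      ≤ ∑ i : Fin m, |B i| := by
    intro ℓ
    set p : Fin m → Prop := fun i => (i : ℕ) ≤ ℓ with hp
    have hG : ∑ i ∈ univ.filter p, ∑ j : Fin m, (u i * x i j - u j * x j i)
        = ∑ i ∈ univ.filter p, ∑ j ∈ univ.filter (fun j => ¬ p j),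
            (u i * x i j - u j * x j i) :=
      antisym_boundary p _ (fun i j => by ring)
    have hH : ∑ i ∈ univ.filter p, ∑ j : Fin m, (u j * x i j - u i * x j i)
        = ∑ i ∈ univ.filter p, ∑ j ∈ univ.filter (fun j => ¬ p j),
            (u j * x i j - u i * x j i) :=
      antisym_boundary p _ (fun i j => by ring)
    have hH0 : ∑ i ∈ univ.filter p, ∑ j : Fin m, (u j * x i j - u i * x j i) = 0 := by
      rw [Finset.sum_congr rfl (fun i _ => h i)]; simp
    have key : ∑ i ∈ univ.filter p, ∑ j ∈ univ.filter (fun j => ¬ p j),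
          (u i - u j) * (x i j + x j i)
        = ∑ i ∈ univ.filter p, B i := by
      have expand : ∀ i j : Fin m, (u i - u j) * (x i j + x j i)
          = (u i * x i j - u j * x j i) - (u j * x i j - u i * x j i) := by
        intro i j; ring
      calc ∑ i ∈ univ.filter p, ∑ j ∈ univ.filter (fun j => ¬ p j),
              (u i - u j) * (x i j + x j i)
          = ∑ i ∈ univ.filter p, ∑ j ∈ univ.filter (fun j => ¬ p j),
              ((u i * x i j - u j * x j i) - (u j * x i j - u i * x j i)) := by
            exact Finset.sum_congr rfl fun i _ =>
              Finset.sum_congr rfl fun j _ => expand i j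
        _ = (∑ i ∈ univ.filter p, ∑ j ∈ univ.filter (fun j => ¬ p j),
              (u i * x i j - u j * x j i))
            - ∑ i ∈ univ.filter p, ∑ j ∈ univ.filter (fun j => ¬ p j),
              (u j * x i j - u i * x j i) := by
            simp [Finset.sum_sub_distrib]
        _ = ∑ i ∈ univ.filter p, B i := by
            rw [← hG, ← hH, hH0, sub_zero, hB]
    rw [key]
    calc ∑ i ∈ univ.filter p, B i ≤ ∑ i ∈ univ.filter p, |B i| :=
          Finset.sum_le_sum fun i _ => le_abs_self _
      _ ≤ ∑ i : Fin m, |B i| :=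
          Finset.sum_le_sum_of_subset_of_nonneg (Finset.filter_subset _ _)
            (fun i _ _ => abs_nonneg _)
  -- Counting: the indicator over levels counts j - i.
  have counting : ∀ i j : Fin m, i < j →
      ∑ ℓ ∈ Finset.range m,
        (if (i : ℕ) ≤ ℓ ∧ ¬ (j : ℕ) ≤ ℓ then (u i - u j) * (x i j + x j i) else 0)
      = ((j : ℕ) - (i : ℕ) : ℕ) * ((u i - u j) * (x i j + x j i)) := by
    intro i j hij
    rw [← Finset.sum_filter]
    have hfilter : (Finset.range m).filter
        (fun ℓ => (i : ℕ) ≤ ℓ ∧ ¬ (j : ℕ) ≤ ℓ) = Finset.Ico (i : ℕ) (j : ℕ) := by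
      ext ℓ
      simp only [Finset.mem_filter, Finset.mem_range, Finset.mem_Ico, not_le]
      have := j.isLt
      omega
    rw [hfilter, Finset.sum_const, Nat.card_Ico, nsmul_eq_mul]
  -- Main chain.
  set t : Fin m → Fin m → ℝ := fun i j => (u i - u j) * (x i j + x j i) with ht
  have step1 : ∑ i : Fin m, ∑ j : Fin m, (u i - u j) * x i j
      ≤ ∑ i : Fin m, ∑ j : Fin m,
          ∑ ℓ ∈ Finset.range m, (if (i : ℕ) ≤ ℓ ∧ ¬ (j : ℕ) ≤ ℓ then t i j else 0) := by
    rw [pair_split (fun i j => (u i - u j) * x i j)]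
    refine Finset.sum_le_sum fun i _ => Finset.sum_le_sum fun j _ => ?_
    rcases lt_trichotomy i j with hij | hij | hij
    · rw [if_pos hij, counting i j hij]
      have hle : u j ≤ u i := hu i j hij.le
      have h1 : (1 : ℝ) ≤ ((j : ℕ) - (i : ℕ) : ℕ) := by
        have : 1 ≤ (j : ℕ) - (i : ℕ) := by
          have : (i : ℕ) < (j : ℕ) := hij
          omega
        exact_mod_cast this
      have hnn : 0 ≤ (u i - u j) * (x i j + x j i) := by
        have := hx i j; have := hx j i; nlinarith
      have hbase : (u i - u j) * x i j + (u j - u i) * x j i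
          ≤ (u i - u j) * (x i j + x j i) := by
        have := hx j i; nlinarith
      nlinarith
    · subst hij
      simp only [if_neg (lt_irrefl i), if_pos rfl]
      have h0 : (u i - u i) * x i i = 0 := by ring
      rw [h0]
      refine Finset.sum_nonneg fun ℓ _ => ?_
      split_ifs with hcond
      · exact absurd hcond.1 hcond.2
      · exact le_rfl
    · rw [if_neg hij.not_gt, if_neg hij.ne']
      refine Finset.sum_nonneg fun ℓ _ => ?_
      split_ifs with hcond
      · exfalso
        have hji : (j : ℕ) < (i : ℕ) := hij
        obtain ⟨hc1, hc2⟩ := hcond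
        omega
      · exact le_rfl
  have step2 : ∑ i : Fin m, ∑ j : Fin m,
        ∑ ℓ ∈ Finset.range m, (if (i : ℕ) ≤ ℓ ∧ ¬ (j : ℕ) ≤ ℓ then t i j else 0)
      = ∑ ℓ ∈ Finset.range m, ∑ i : Fin m, ∑ j : Fin m,
          (if (i : ℕ) ≤ ℓ ∧ ¬ (j : ℕ) ≤ ℓ then t i j else 0) := by
    calc ∑ i : Fin m, ∑ j : Fin m, ∑ ℓ ∈ Finset.range m,
          (if (i : ℕ) ≤ ℓ ∧ ¬ (j : ℕ) ≤ ℓ then t i j else 0)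
        = ∑ i : Fin m, ∑ ℓ ∈ Finset.range m, ∑ j : Fin m,
            (if (i : ℕ) ≤ ℓ ∧ ¬ (j : ℕ) ≤ ℓ then t i j else 0) :=
          Finset.sum_congr rfl fun i _ => Finset.sum_comm
      _ = ∑ ℓ ∈ Finset.range m, ∑ i : Fin m, ∑ j : Fin m,
            (if (i : ℕ) ≤ ℓ ∧ ¬ (j : ℕ) ≤ ℓ then t i j else 0) := Finset.sum_comm
  have step3 : ∀ ℓ ∈ Finset.range m,
      ∑ i : Fin m, ∑ j : Fin m, (if (i : ℕ) ≤ ℓ ∧ ¬ (j : ℕ) ≤ ℓ then t i j else 0)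
      ≤ ∑ i : Fin m, |B i| := by
    intro ℓ _
    have conv : ∑ i : Fin m, ∑ j : Fin m,
        (if (i : ℕ) ≤ ℓ ∧ ¬ (j : ℕ) ≤ ℓ then t i j else 0)
        = ∑ i ∈ univ.filter (fun i : Fin m => (i : ℕ) ≤ ℓ),
            ∑ j ∈ univ.filter (fun j : Fin m => ¬ (j : ℕ) ≤ ℓ), t i j := by
      rw [Finset.sum_filter]
      refine Finset.sum_congr rfl fun i _ => ?_
      rw [Finset.sum_filter]
      by_cases hi : (i : ℕ) ≤ ℓ
      · simp only [hi, if_true, true_and]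
      · simp [hi]
    rw [conv]
    exact stepA ℓ
  calc ∑ i : Fin m, ∑ j : Fin m, (u i - u j) * x i j
      ≤ ∑ ℓ ∈ Finset.range m, ∑ i : Fin m, ∑ j : Fin m,
          (if (i : ℕ) ≤ ℓ ∧ ¬ (j : ℕ) ≤ ℓ then t i j else 0) := by
        rw [← step2]; exact step1
    _ ≤ ∑ ℓ ∈ Finset.range m, ∑ i : Fin m, |B i| := Finset.sum_le_sum step3
    _ = (m : ℝ) * ∑ i : Fin m, |B i| := by
        rw [Finset.sum_const, Finset.card_range, nsmul_eq_mul]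

/-- The key real-number inequality behind Lemma 8.4: there is a constant `C`
depending only on `m` such that for positive reals `u i` and nonnegative reals
`x i j` satisfying the moment-map vanishing condition
`∑ j (u j * x i j - u i * x j i) = 0` for all `i`, one has
`∑ i ∑ j (u i - u j) * x i j ≤ C * ∑ i |∑ j (u i * x i j - u j * x j i)|`. -/
theorem stmt_2 (m : ℕ) (hm : 1 ≤ m) :
    ∃ C : ℝ, 0 ≤ C ∧
      ∀ u : Fin m → ℝ, (∀ i, 0 < u i) →
      ∀ x : Fin m → Fin m → ℝ, (∀ i j, 0 ≤ x i j) →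
      (∀ i : Fin m, ∑ j : Fin m, (u j * x i j - u i * x j i) = 0) →
      ∑ i : Fin m, ∑ j : Fin m, (u i - u j) * x i j ≤
        C * ∑ i : Fin m, |∑ j : Fin m, (u i * x i j - u j * x j i)| := by
  refine ⟨(m : ℝ), Nat.cast_nonneg m, ?_⟩
  intro u hu x hx h
  set σ : Equiv.Perm (Fin m) := Tuple.sort (fun i => -u i) with hσ
  have hmono : Monotone ((fun i => -u i) ∘ σ) := Tuple.monotone_sort (fun i => -u i)
  set u' : Fin m → ℝ := fun i => u (σ i) with hu'
  set x' : Fin m → Fin m → ℝ := fun i j => x (σ i) (σ j) with hx'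
  have hu'sorted : ∀ i j : Fin m, i ≤ j → u' j ≤ u' i := by
    intro i j hij
    have := hmono hij
    simp only [Function.comp_apply] at this
    simpa [hu'] using neg_le_neg_iff.mp this
  have hx'nn : ∀ i j, 0 ≤ x' i j := fun i j => hx _ _
  have h' : ∀ i : Fin m, ∑ j : Fin m, (u' j * x' i j - u' i * x' j i) = 0 := by
    intro i
    have := h (σ i)
    calc ∑ j : Fin m, (u' j * x' i j - u' i * x' j i)
        = ∑ j : Fin m, (u j * x (σ i) j - u (σ i) * x j (σ i)) :=
          Fintype.sum_equiv σ _ _ (fun j => rfl)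
      _ = 0 := this
  have main := sorted_case m u' hu'sorted x' hx'nn h'
  have lhs_eq : ∑ i : Fin m, ∑ j : Fin m, (u' i - u' j) * x' i j
      = ∑ i : Fin m, ∑ j : Fin m, (u i - u j) * x i j := by
    refine Fintype.sum_equiv σ _ _ (fun i => ?_)
    exact Fintype.sum_equiv σ _ _ (fun j => rfl)
  have rhs_eq : ∑ i : Fin m, |∑ j : Fin m, (u' i * x' i j - u' j * x' j i)|
      = ∑ i : Fin m, |∑ j : Fin m, (u i * x i j - u j * x j i)| := by
    refine Fintype.sum_equiv σ _ _ (fun i => ?_)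
    congr 1
    exact Fintype.sum_equiv σ _ _ (fun j => rfl)
  rw [lhs_eq, rhs_eq] at main
  exact main
end

section
/- For every m ≥ 1 there exists a constant C ≥ 0, depending only on m, such that for every normal matrix α ∈ M_m(ℂ) and every g ∈ GL_m(ℂ), writing β = g·α·g⁻¹, one has ‖β‖² − ‖α‖² ≤ C · ‖ββᴴ − βᴴβ‖, where ‖·‖ is the Frobenius norm. -/
open Matrix

/-- The Frobenius norm of a complex `m × m` matrix. -/
noncomputable def frobNorm {m : ℕ} (A : Matrix (Fin m) (Fin m) ℂ) : ℝ :=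
  Real.sqrt (∑ i, ∑ j, ‖A i j‖ ^ 2)

namespace Lem84

noncomputable def F {n : Type*} [Fintype n] (A : Matrix n n ℂ) : ℝ :=
  ∑ i, ∑ j, ‖A i j‖ ^ 2

lemma F_nonneg {n : Type*} [Fintype n] (A : Matrix n n ℂ) : 0 ≤ F A := by
  refine Finset.sum_nonneg fun i _ => Finset.sum_nonneg fun j _ => by positivity

lemma frobNorm_sq {m : ℕ} (A : Matrix (Fin m) (Fin m) ℂ) : frobNorm A ^ 2 = F A := by
  rw [frobNorm]
  exact Real.sq_sqrt (F_nonneg A)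

lemma coe_F {n : Type*} [Fintype n] [DecidableEq n] (A : Matrix n n ℂ) :
    (F A : ℂ) = Matrix.trace (Aᴴ * A) := by
  rw [Matrix.trace]
  push_cast [F]
  rw [Finset.sum_comm]
  refine Finset.sum_congr rfl fun j _ => ?_
  rw [Matrix.diag, Matrix.mul_apply]
  refine Finset.sum_congr rfl fun i _ => ?_
  rw [Matrix.conjTranspose_apply]
  rw [show ((‖A i j‖ : ℂ) ^ 2) = ((‖A i j‖ ^ 2 : ℝ) : ℂ) by push_cast; ring,
    Complex.sq_norm, Complex.normSq_eq_conj_mul_self]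
  rfl

lemma F_conj {n : Type*} [Fintype n] [DecidableEq n] (U A : Matrix n n ℂ)
    (_h1 : Uᴴ * U = 1) (h2 : U * Uᴴ = 1) : F (Uᴴ * A * U) = F A := by
  have : ((F (Uᴴ * A * U) : ℂ)) = (F A : ℂ) := by
    rw [coe_F, coe_F]
    have : (Uᴴ * A * U)ᴴ * (Uᴴ * A * U) = Uᴴ * (Aᴴ * A) * U := by
      simp only [Matrix.conjTranspose_mul, Matrix.conjTranspose_conjTranspose]
      calc Uᴴ * (Aᴴ * U) * (Uᴴ * A * U) = Uᴴ * Aᴴ * (U * Uᴴ) * A * U := by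
            noncomm_ring
        _ = Uᴴ * (Aᴴ * A) * U := by rw [h2]; noncomm_ring
    rw [this, Matrix.trace_mul_comm, ← Matrix.mul_assoc, h2, Matrix.one_mul]
  exact_mod_cast this

lemma abs_entry_le_frobNorm {m : ℕ} (A : Matrix (Fin m) (Fin m) ℂ) (i j : Fin m) :
    ‖A i j‖ ≤ frobNorm A := by
  rw [frobNorm, show ‖A i j‖ = Real.sqrt (‖A i j‖ ^ 2) by
    rw [Real.sqrt_sq (norm_nonneg _)]]
  apply Real.sqrt_le_sqrt
  calc ‖A i j‖ ^ 2 ≤ ∑ j', ‖A i j'‖ ^ 2 :=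
        Finset.single_le_sum (f := fun j' => ‖A i j'‖ ^ 2)
          (fun j' _ => by positivity) (Finset.mem_univ j)
    _ ≤ ∑ i', ∑ j', ‖A i' j'‖ ^ 2 :=
        Finset.single_le_sum (f := fun i' => ∑ j', ‖A i' j'‖ ^ 2)
          (fun i' _ => Finset.sum_nonneg fun j' _ => by positivity) (Finset.mem_univ i)

lemma frobNorm_nonneg {m : ℕ} (A : Matrix (Fin m) (Fin m) ℂ) : 0 ≤ frobNorm A :=
  Real.sqrt_nonneg _

end Lem84
open Matrix Finset

namespace Lem84t
variable {m : ℕ}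

-- weight
noncomputable def w (T : Matrix (Fin m) (Fin m) ℂ) (i j : Fin m) : ℝ := ‖T i j‖ ^ 2

lemma w_nonneg (T : Matrix (Fin m) (Fin m) ℂ) (i j : Fin m) : 0 ≤ w T i j := by
  unfold w; positivity

-- diagonal of the commutator
lemma diag_comm (T : Matrix (Fin m) (Fin m) ℂ) (i : Fin m) :
    ((T * Tᴴ - Tᴴ * T) i i).re = (∑ j, w T i j) - (∑ j, w T j i) := by
  have h1 : (T * Tᴴ) i i = ((∑ j, w T i j : ℝ) : ℂ) := by
    rw [Matrix.mul_apply]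
    push_cast
    refine Finset.sum_congr rfl fun j _ => ?_
    simp only [Matrix.conjTranspose_apply, RCLike.star_def, Complex.mul_conj, w,
      Complex.sq_norm]
  have h2 : (Tᴴ * T) i i = ((∑ j, w T j i : ℝ) : ℂ) := by
    rw [Matrix.mul_apply]
    push_cast
    refine Finset.sum_congr rfl fun j _ => ?_
    simp only [Matrix.conjTranspose_apply, RCLike.star_def, w, Complex.sq_norm,
      ← Complex.normSq_eq_conj_mul_self]
  rw [Matrix.sub_apply, Complex.sub_re, h1, h2, Complex.ofReal_re, Complex.ofReal_re]

-- partial sum identity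
lemma partial_sum (T : Matrix (Fin m) (Fin m) ℂ) (hT : T.BlockTriangular id) (k : Fin m) :
    ∑ i ∈ univ.filter (· ≤ k), ((∑ j, w T i j) - (∑ j, w T j i))
      = ∑ i ∈ univ.filter (· ≤ k), ∑ j ∈ univ.filter (fun j => ¬ j ≤ k), w T i j := by
  rw [Finset.sum_sub_distrib]
  have e1 : ∑ i ∈ univ.filter (· ≤ k), ∑ j, w T i j
      = (∑ i ∈ univ.filter (· ≤ k), ∑ j ∈ univ.filter (· ≤ k), w T i j)
        + ∑ i ∈ univ.filter (· ≤ k), ∑ j ∈ univ.filter (fun j => ¬ j ≤ k), w T i j := by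
    rw [← Finset.sum_add_distrib]
    refine Finset.sum_congr rfl fun i _ => ?_
    exact (Finset.sum_filter_add_sum_filter_not univ (fun j => j ≤ k) (w T i)).symm
  have e2 : ∑ i ∈ univ.filter (· ≤ k), ∑ j, w T j i
      = ∑ i ∈ univ.filter (· ≤ k), ∑ j ∈ univ.filter (· ≤ k), w T j i := by
    refine Finset.sum_congr rfl fun i hi => ?_
    rw [← Finset.sum_filter_add_sum_filter_not univ (fun j => j ≤ k) (fun j => w T j i)]
    have : ∑ j ∈ univ.filter (fun j => ¬ j ≤ k), w T j i = 0 := by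
      refine Finset.sum_eq_zero fun j hj => ?_
      simp only [Finset.mem_filter, not_le] at hj hi
      have hij : i < j := lt_of_le_of_lt hi.2 hj.2
      rw [w, hT hij]
      simp
    rw [this, add_zero]
  have e3 : ∑ i ∈ univ.filter (· ≤ k), ∑ j ∈ univ.filter (· ≤ k), w T j i
      = ∑ i ∈ univ.filter (· ≤ k), ∑ j ∈ univ.filter (· ≤ k), w T i j :=
    Finset.sum_comm
  rw [e1, e2, e3]; ring

-- lower bound on the partial sum
lemma partial_sum_ge (T : Matrix (Fin m) (Fin m) ℂ) (hT : T.BlockTriangular id) (k : Fin m) :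
    ∑ j ∈ univ.filter (fun j => ¬ j ≤ k), w T k j
      ≤ ∑ i ∈ univ.filter (· ≤ k), ((∑ j, w T i j) - (∑ j, w T j i)) := by
  rw [partial_sum T hT k]
  refine Finset.single_le_sum (f := fun i => ∑ j ∈ univ.filter (fun j => ¬ j ≤ k), w T i j)
    (fun i _ => Finset.sum_nonneg fun j _ => w_nonneg T i j) ?_
  simp

-- the strictly-upper mass
lemma upper_mass (T : Matrix (Fin m) (Fin m) ℂ) (hT : T.BlockTriangular id) :
    (∑ i, ∑ j, w T i j) - ∑ i, w T i i
      = ∑ k, ∑ j ∈ univ.filter (fun j => ¬ j ≤ k), w T k j := by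
  rw [← Finset.sum_sub_distrib]
  refine Finset.sum_congr rfl fun i _ => ?_
  rw [← Finset.sum_filter_add_sum_filter_not univ (fun j => j ≤ i) (w T i)]
  have : ∑ j ∈ univ.filter (fun j => j ≤ i), w T i j = w T i i := by
    refine Finset.sum_eq_single_of_mem i (by simp) fun j hj hji => ?_
    simp only [Finset.mem_filter] at hj
    have : j < i := lt_of_le_of_ne hj.2 hji
    rw [w, hT this]
    simp
  rw [this]; ring

end Lem84t
open Matrix Finset

namespace Lem84s

/-- Schur triangulation: every complex square matrix is unitarily triangularizable. -/
theorem schur : ∀ (n : ℕ) (A : Matrix (Fin n) (Fin n) ℂ),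
    ∃ U : Matrix (Fin n) (Fin n) ℂ,
      Uᴴ * U = 1 ∧ U * Uᴴ = 1 ∧ (Uᴴ * A * U).BlockTriangular (id : Fin n → Fin n) := by
  intro n
  induction n with
  | zero =>
    intro A
    exact ⟨1, by simp, by simp, fun i j _ => i.elim0⟩
  | succ n ih =>
    intro A
    -- find an eigenvector
    set V := EuclideanSpace ℂ (Fin (n + 1)) with hV
    let f : Module.End ℂ V := Matrix.toEuclideanLin A
    obtain ⟨μ, hμ⟩ := Module.End.exists_eigenvalue f
    obtain ⟨v, hv⟩ := hμ.exists_hasEigenvector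
    have hv2 : v ≠ 0 := hv.right
    set v₀ : V := (‖v‖⁻¹ : ℝ) • v with hv₀def
    have hv₀norm : ‖v₀‖ = 1 := norm_smul_inv_norm hv2
    have hv₀eig : Matrix.mulVec A v₀ = μ • v₀ := by
      have h1 : Matrix.mulVec A v = μ • v := by
        have := congrArg WithLp.ofLp hv.apply_eq_smul
        exact this
      show A *ᵥ ((‖v‖⁻¹ : ℝ) • v.ofLp) = μ • ((‖v‖⁻¹ : ℝ) • v.ofLp)
      rw [Matrix.mulVec_smul, h1, smul_comm]
    -- extend to an orthonormal basis
    have hcard : Module.finrank ℂ V = Fintype.card (Fin (n + 1)) :=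
      finrank_euclideanSpace
    have horth : Orthonormal ℂ (Set.restrict {(0 : Fin (n + 1))} (fun _ => v₀)) := by
      constructor
      · intro i; exact hv₀norm
      · intro i j hij
        exfalso
        apply hij
        have hi := i.2
        have hj := j.2
        simp only [Set.mem_singleton_iff] at hi hj
        exact Subtype.ext (hi.trans hj.symm)
    obtain ⟨b, hb⟩ := horth.exists_orthonormalBasis_extension_of_card_eq hcard
    have hb0 : b 0 = v₀ := hb 0 rfl
    -- the unitary with columns b
    set U : Matrix (Fin (n + 1)) (Fin (n + 1)) ℂ := Matrix.of fun i j => (b j : V) i with hU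
    have hUentry : ∀ i j, (Uᴴ * U) i j = (inner ℂ (b i) (b j) : ℂ) := by
      intro i j
      rw [Matrix.mul_apply, PiLp.inner_apply]
      refine Finset.sum_congr rfl fun k _ => ?_
      rw [Matrix.conjTranspose_apply]
      simp [hU, RCLike.inner_apply, mul_comm]
    have hUU : Uᴴ * U = 1 := by
      ext i j
      rw [hUentry i j, Matrix.one_apply, orthonormal_iff_ite.mp b.orthonormal]
    have hUU' : U * Uᴴ = 1 := mul_eq_one_comm.mp hUU
    set B : Matrix (Fin (n + 1)) (Fin (n + 1)) ℂ := Uᴴ * A * U with hB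
    -- first column of B
    have hcol : ∀ k, (A * U) k 0 = μ * U k 0 := by
      intro k
      have : (A * U) k 0 = Matrix.mulVec A v₀ k := by
        rw [Matrix.mul_apply, Matrix.mulVec, dotProduct]
        refine Finset.sum_congr rfl fun l _ => ?_
        simp [hU, hb0]
      rw [this, hv₀eig, show U k 0 = v₀ k by simp [hU, hb0]]
      rfl
    have hB0 : ∀ i, i ≠ 0 → B i 0 = 0 := by
      intro i hi
      have : B i 0 = μ * (Uᴴ * U) i 0 := by
        rw [hB, Matrix.mul_assoc, Matrix.mul_apply, Matrix.mul_apply, Finset.mul_sum]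
        refine Finset.sum_congr rfl fun k _ => ?_
        rw [hcol k]
        ring
      rw [this, hUU, Matrix.one_apply_ne hi]
      ring
    -- the deflated matrix
    set A' : Matrix (Fin n) (Fin n) ℂ := B.submatrix Fin.succ Fin.succ with hA'
    obtain ⟨Q, hQ1, hQ2, hQ3⟩ := ih A'
    -- the block unitary
    set W : Matrix (Fin (n + 1)) (Fin (n + 1)) ℂ := Matrix.of fun i j =>
      Fin.cases (Fin.cases (1 : ℂ) (fun _ => (0 : ℂ)) j)
        (fun i' => Fin.cases (0 : ℂ) (fun j' => Q i' j') j) i with hW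
    have hW00 : W 0 0 = 1 := rfl
    have hW0s : ∀ j', W 0 (Fin.succ j') = 0 := fun j' => rfl
    have hWs0 : ∀ i', W (Fin.succ i') 0 = 0 := fun i' => rfl
    have hWss : ∀ i' j', W (Fin.succ i') (Fin.succ j') = Q i' j' := fun i' j' => rfl
    have hWW : Wᴴ * W = 1 := by
      ext i j
      rw [Matrix.mul_apply]
      induction i using Fin.cases with
      | zero =>
        induction j using Fin.cases with
        | zero =>
          rw [Fin.sum_univ_succ]
          simp [Matrix.conjTranspose_apply, hW00, hWs0, Matrix.one_apply]
        | succ j' =>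
          rw [Fin.sum_univ_succ]
          simp [Matrix.conjTranspose_apply, hW00, hW0s, hWs0, hWss,
            Matrix.one_apply, (Fin.succ_ne_zero j').symm]
      | succ i' =>
        induction j using Fin.cases with
        | zero =>
          rw [Fin.sum_univ_succ]
          simp [Matrix.conjTranspose_apply, hW00, hW0s, hWs0, hWss,
            Matrix.one_apply, Fin.succ_ne_zero i']
        | succ j' =>
          rw [Fin.sum_univ_succ]
          simp only [Matrix.conjTranspose_apply, hW0s, hWs0, hWss]
          rw [star_zero, zero_mul, zero_add]
          have : (∑ x, star (Q x i') * Q x j') = (Qᴴ * Q) i' j' := by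
            rw [Matrix.mul_apply]
            exact Finset.sum_congr rfl fun x _ => by rw [Matrix.conjTranspose_apply]
          rw [this, hQ1, Matrix.one_apply, Matrix.one_apply]
          simp [Fin.succ_inj]
    have hWW' : W * Wᴴ = 1 := mul_eq_one_comm.mp hWW
    -- assemble
    refine ⟨U * W, ?_, ?_, ?_⟩
    · rw [Matrix.conjTranspose_mul]
      calc Wᴴ * Uᴴ * (U * W) = Wᴴ * (Uᴴ * U) * W := by noncomm_ring
        _ = 1 := by rw [hUU, Matrix.mul_one, hWW]
    · rw [Matrix.conjTranspose_mul]
      calc U * W * (Wᴴ * Uᴴ) = U * (W * Wᴴ) * Uᴴ := by noncomm_ring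
        _ = 1 := by rw [hWW', Matrix.mul_one, hUU']
    · -- triangularity
      have hM : (U * W)ᴴ * A * (U * W) = Wᴴ * B * W := by
        rw [hB, Matrix.conjTranspose_mul]
        noncomm_ring
      rw [hM]
      intro i j hij
      simp only [id_eq] at hij
      -- inner sum lemma
      have hinner : ∀ (i' : Fin n) (l : Fin (n + 1)),
          (Wᴴ * B) (Fin.succ i') l = ∑ k', (starRingEnd ℂ) (Q k' i') * B (Fin.succ k') l := by
        intro i' l
        rw [Matrix.mul_apply, Fin.sum_univ_succ]
        rw [show (Wᴴ) (Fin.succ i') 0 = 0 by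
          rw [Matrix.conjTranspose_apply, hW0s]; simp]
        rw [zero_mul, zero_add]
        refine Finset.sum_congr rfl fun k' _ => ?_
        rw [Matrix.conjTranspose_apply, hWss]
        rfl
      induction i using Fin.cases with
      | zero => exact absurd hij (by simp)
      | succ i' =>
        induction j using Fin.cases with
        | zero =>
          rw [Matrix.mul_apply, Fin.sum_univ_succ, hinner i' 0]
          rw [show ∑ k', (starRingEnd ℂ) (Q k' i') * B (Fin.succ k') 0 = 0 from
            Finset.sum_eq_zero fun k' _ => by rw [hB0 _ (Fin.succ_ne_zero k')]; ring]
          rw [zero_mul, zero_add]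
          refine Finset.sum_eq_zero fun l' _ => ?_
          rw [hWs0]; ring
        | succ j' =>
          have hij' : j' < i' := by
            rwa [Fin.succ_lt_succ_iff] at hij
          rw [Matrix.mul_apply, Fin.sum_univ_succ]
          rw [show W 0 (Fin.succ j') = 0 from hW0s j', mul_zero, zero_add]
          have : ∀ l', (Wᴴ * B) (Fin.succ i') (Fin.succ l') * W (Fin.succ l') (Fin.succ j')
              = (∑ k', (starRingEnd ℂ) (Q k' i') * A' k' l') * Q l' j' := by
            intro l'
            rw [hinner, hWss, hA']
            rfl
          rw [Finset.sum_congr rfl fun l' _ => this l']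
          have hzero : (Qᴴ * A' * Q) i' j' = 0 := hQ3 hij'
          rw [← hzero, Matrix.mul_apply]
          refine Finset.sum_congr rfl fun l' _ => ?_
          rw [Matrix.mul_apply]
          rfl

end Lem84s
open Matrix Finset Polynomial

namespace Lem84c

lemma charpoly_conj {n : Type*} [Fintype n] [DecidableEq n] (P A Q : Matrix n n ℂ)
    (h1 : P * Q = 1) : (P * A * Q).charpoly = A.charpoly := by
  have hC : ∀ M N : Matrix n n ℂ,
      (Polynomial.C : ℂ →+* ℂ[X]).mapMatrix (M * N)
        = (Polynomial.C : ℂ →+* ℂ[X]).mapMatrix M * (Polynomial.C : ℂ →+* ℂ[X]).mapMatrix N :=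
    fun M N => map_mul _ M N
  set P' := (Polynomial.C : ℂ →+* ℂ[X]).mapMatrix P with hP'
  set Q' := (Polynomial.C : ℂ →+* ℂ[X]).mapMatrix Q with hQ'
  have hPQ' : P' * Q' = 1 := by
    rw [hP', hQ', ← hC, h1]
    exact map_one _
  have key : charmatrix (P * A * Q) = P' * charmatrix A * Q' := by
    rw [charmatrix, charmatrix, Matrix.mul_sub, Matrix.sub_mul]
    congr 1
    · symm
      rw [show P' * Matrix.scalar n (X : ℂ[X]) = Matrix.scalar n (X : ℂ[X]) * P' by
        ext i j
        rw [Matrix.scalar_apply, Matrix.mul_diagonal, Matrix.diagonal_mul]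
        ring_nf]
      rw [Matrix.mul_assoc, hPQ', Matrix.mul_one]
    · rw [hC, hC]
  rw [Matrix.charpoly, key, Matrix.det_mul, Matrix.det_mul, mul_comm, ← mul_assoc,
    ← Matrix.det_mul, show Q' * P' = 1 from mul_eq_one_comm.mp hPQ', Matrix.det_one,
    one_mul]
  rfl

/-- If two tuples of complex numbers give the same product of linear factors, the sums of
squared absolute values of their entries agree. -/
lemma sum_sq_abs_eq {m : ℕ} (a b : Fin m → ℂ)
    (h : (∏ i, (X - C (a i))) = ∏ i, (X - C (b i))) :
    ∑ i, ‖a i‖ ^ 2 = ∑ i, ‖b i‖ ^ 2 := by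
  have key : Multiset.map a Finset.univ.val = Multiset.map b Finset.univ.val := by
    have ra : (∏ i, (X - C (a i))).roots = Multiset.map a Finset.univ.val := by
      rw [show (∏ i, (X - C (a i))) = (Multiset.map (fun r => X - C r) (Multiset.map a Finset.univ.val)).prod by
        rw [Multiset.map_map]; rfl]
      exact Polynomial.roots_multiset_prod_X_sub_C _
    have rb : (∏ i, (X - C (b i))).roots = Multiset.map b Finset.univ.val := by
      rw [show (∏ i, (X - C (b i))) = (Multiset.map (fun r => X - C r) (Multiset.map b Finset.univ.val)).prod by
        rw [Multiset.map_map]; rfl]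
      exact Polynomial.roots_multiset_prod_X_sub_C _
    rw [← ra, ← rb, h]
  calc ∑ i, ‖a i‖ ^ 2
      = (Multiset.map (fun z => ‖z‖ ^ 2) (Multiset.map a Finset.univ.val)).sum := by
        rw [Multiset.map_map]; rfl
    _ = (Multiset.map (fun z => ‖z‖ ^ 2) (Multiset.map b Finset.univ.val)).sum := by
        rw [key]
    _ = ∑ i, ‖b i‖ ^ 2 := by rw [Multiset.map_map]; rfl

end Lem84c
open Matrix Finset Polynomial

namespace Lem84

-- === key Henrici-type estimate for triangular matrices ===
theorem key_est {m : ℕ} (T : Matrix (Fin m) (Fin m) ℂ) (hT : T.BlockTriangular id) :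
    Lem84.F T - ∑ i, ‖T i i‖ ^ 2
      ≤ (m : ℝ) * m * frobNorm (T * Tᴴ - Tᴴ * T) := by
  set P := T * Tᴴ - Tᴴ * T with hP
  have h1 : Lem84.F T - ∑ i, ‖T i i‖ ^ 2
      = ∑ k, ∑ j ∈ univ.filter (fun j => ¬ j ≤ k), Lem84t.w T k j :=
    Lem84t.upper_mass T hT
  have h2 : ∀ k : Fin m,
      ∑ j ∈ univ.filter (fun j => ¬ j ≤ k), Lem84t.w T k j ≤ (m : ℝ) * frobNorm P := by
    intro k
    refine le_trans (Lem84t.partial_sum_ge T hT k) ?_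
    have h3 : ∀ i : Fin m, (∑ j, Lem84t.w T i j) - (∑ j, Lem84t.w T j i) ≤ frobNorm P := by
      intro i
      rw [← Lem84t.diag_comm T i]
      calc (P i i).re ≤ |(P i i).re| := le_abs_self _
        _ ≤ ‖P i i‖ := Complex.abs_re_le_norm _
        _ ≤ frobNorm P := Lem84.abs_entry_le_frobNorm P i i
    calc ∑ i ∈ univ.filter (· ≤ k), ((∑ j, Lem84t.w T i j) - (∑ j, Lem84t.w T j i))
        ≤ ∑ _i ∈ univ.filter (· ≤ k), frobNorm P :=
          Finset.sum_le_sum fun i _ => h3 i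
      _ = (univ.filter (· ≤ k)).card * frobNorm P := by rw [Finset.sum_const, nsmul_eq_mul]
      _ ≤ (m : ℝ) * frobNorm P := by
          refine mul_le_mul_of_nonneg_right ?_ (Lem84.frobNorm_nonneg P)
          have : (univ.filter (· ≤ k)).card ≤ m := by
            calc (univ.filter (· ≤ k)).card ≤ (univ : Finset (Fin m)).card :=
                  Finset.card_filter_le _ _
              _ = m := by simp
          exact_mod_cast this
  calc Lem84.F T - ∑ i, ‖T i i‖ ^ 2
      = ∑ k, ∑ j ∈ univ.filter (fun j => ¬ j ≤ k), Lem84t.w T k j := h1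
    _ ≤ ∑ _k : Fin m, (m : ℝ) * frobNorm P := Finset.sum_le_sum fun k _ => h2 k
    _ = (m : ℝ) * m * frobNorm P := by
        rw [Finset.sum_const]
        simp [nsmul_eq_mul]
        ring

lemma frobNorm_eq_sqrt_F {m : ℕ} (A : Matrix (Fin m) (Fin m) ℂ) :
    frobNorm A = Real.sqrt (Lem84.F A) := rfl

lemma frobNorm_conj {m : ℕ} (U A : Matrix (Fin m) (Fin m) ℂ)
    (h1 : Uᴴ * U = 1) (h2 : U * Uᴴ = 1) : frobNorm (Uᴴ * A * U) = frobNorm A := by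
  rw [frobNorm_eq_sqrt_F, frobNorm_eq_sqrt_F, Lem84.F_conj U A h1 h2]

lemma comm_conj {m : ℕ} (U A : Matrix (Fin m) (Fin m) ℂ)
    (h2 : U * Uᴴ = 1) :
    (Uᴴ * A * U) * (Uᴴ * A * U)ᴴ - (Uᴴ * A * U)ᴴ * (Uᴴ * A * U)
      = Uᴴ * (A * Aᴴ - Aᴴ * A) * U := by
  have e1 : (Uᴴ * A * U)ᴴ = Uᴴ * Aᴴ * U := by
    simp only [Matrix.conjTranspose_mul, Matrix.conjTranspose_conjTranspose]
    noncomm_ring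
  rw [e1]
  have e2 : (Uᴴ * A * U) * (Uᴴ * Aᴴ * U) = Uᴴ * (A * Aᴴ) * U := by
    calc (Uᴴ * A * U) * (Uᴴ * Aᴴ * U) = Uᴴ * A * (U * Uᴴ) * Aᴴ * U := by noncomm_ring
      _ = Uᴴ * (A * Aᴴ) * U := by rw [h2]; noncomm_ring
  have e3 : (Uᴴ * Aᴴ * U) * (Uᴴ * A * U) = Uᴴ * (Aᴴ * A) * U := by
    calc (Uᴴ * Aᴴ * U) * (Uᴴ * A * U) = Uᴴ * Aᴴ * (U * Uᴴ) * A * U := by noncomm_ring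
      _ = Uᴴ * (Aᴴ * A) * U := by rw [h2]; noncomm_ring
  rw [e2, e3]
  noncomm_ring

lemma F_ge_diag {m : ℕ} (T : Matrix (Fin m) (Fin m) ℂ) (hT : T.BlockTriangular id) :
    ∑ i, ‖T i i‖ ^ 2 ≤ Lem84.F T := by
  have := Lem84t.upper_mass T hT
  have h0 : 0 ≤ ∑ k, ∑ j ∈ univ.filter (fun j => ¬ j ≤ k), Lem84t.w T k j :=
    Finset.sum_nonneg fun k _ => Finset.sum_nonneg fun j _ => Lem84t.w_nonneg T k j
  have hFT : Lem84.F T = ∑ i, ∑ j, Lem84t.w T i j := rfl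
  have hdg : ∑ i, ‖T i i‖ ^ 2 = ∑ i, Lem84t.w T i i := rfl
  rw [hFT, hdg]
  linarith

end Lem84

set_option maxHeartbeats 1000000 in
/-- Lemma 8.4 in the adjoint model: there is a constant `C ≥ 0` depending only
on `m` such that for every normal matrix `α` and every `g ∈ GL_m(ℂ)`, with
`β = g α g⁻¹`, one has `‖β‖² - ‖α‖² ≤ C ‖β βᴴ - βᴴ β‖` (Frobenius norm). -/
theorem stmt_3 (m : ℕ) (hm : 1 ≤ m) :
    ∃ C : ℝ, 0 ≤ C ∧
      ∀ α : Matrix (Fin m) (Fin m) ℂ, α * αᴴ = αᴴ * α →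
      ∀ g : (Matrix (Fin m) (Fin m) ℂ)ˣ,
      ∀ β : Matrix (Fin m) (Fin m) ℂ,
        β = (g : Matrix (Fin m) (Fin m) ℂ) * α * (↑g⁻¹ : Matrix (Fin m) (Fin m) ℂ) →
        frobNorm β ^ 2 - frobNorm α ^ 2 ≤ C * frobNorm (β * βᴴ - βᴴ * β) := by
  refine ⟨(m : ℝ) * m, by positivity, ?_⟩
  intro α hα g β hβ
  obtain ⟨U, hU1, hU2, hU3⟩ := Lem84s.schur m β
  obtain ⟨V, hV1, hV2, hV3⟩ := Lem84s.schur m α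
  set T := Uᴴ * β * U with hT
  set S := Vᴴ * α * V with hS
  -- α's triangular form has the same diagonal ℓ² mass as α itself
  have hSnormal : S * Sᴴ - Sᴴ * S = 0 := by
    rw [hS, Lem84.comm_conj V α hV2, show α * αᴴ - αᴴ * α = 0 by rw [hα, sub_self],
      Matrix.mul_zero, Matrix.zero_mul]
  have hFα : Lem84.F α = ∑ i, ‖S i i‖ ^ 2 := by
    have h1 : Lem84.F α = Lem84.F S := (Lem84.F_conj V α hV1 hV2).symm
    have h2 : Lem84.F S - ∑ i, ‖S i i‖ ^ 2 ≤ 0 := by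
      have := Lem84.key_est S hV3
      rw [hSnormal] at this
      have hz : frobNorm (0 : Matrix (Fin m) (Fin m) ℂ) = 0 := by
        simp [frobNorm]
      rw [hz, mul_zero] at this
      linarith
    have h3 := Lem84.F_ge_diag S hV3
    linarith
  -- same char polys hence same diagonal mass for T
  have hcpβ : T.charpoly = β.charpoly := Lem84c.charpoly_conj Uᴴ β U hU1
  have hcpα : S.charpoly = α.charpoly := Lem84c.charpoly_conj Vᴴ α V hV1
  have hcpβα : β.charpoly = α.charpoly := by
    have hgg : (↑g : Matrix (Fin m) (Fin m) ℂ) * (↑g⁻¹ : Matrix (Fin m) (Fin m) ℂ) = 1 :=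
      g.mul_inv
    have h2 := Lem84c.charpoly_conj (↑g : Matrix (Fin m) (Fin m) ℂ) α
      (↑g⁻¹ : Matrix (Fin m) (Fin m) ℂ) hgg
    rw [hβ]
    exact h2
  have hdiag : ∑ i, ‖S i i‖ ^ 2 = ∑ i, ‖T i i‖ ^ 2 := by
    refine Lem84c.sum_sq_abs_eq (fun i => S i i) (fun i => T i i) ?_
    rw [← Matrix.charpoly_of_upperTriangular S hV3, ← Matrix.charpoly_of_upperTriangular T hU3,
      hcpα, hcpβ, hcpβα]
  -- conclude
  have hFβ : Lem84.F β = Lem84.F T := (Lem84.F_conj U β hU1 hU2).symm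
  have hcomm : frobNorm (T * Tᴴ - Tᴴ * T) = frobNorm (β * βᴴ - βᴴ * β) := by
    rw [hT, Lem84.comm_conj U β hU2]
    exact Lem84.frobNorm_conj U _ hU1 hU2
  have hkey := Lem84.key_est T hU3
  rw [Lem84.frobNorm_sq, Lem84.frobNorm_sq, hFβ, hFα, hdiag]
  rw [hcomm] at hkey
  exact hkey
end

section
/- For every m ≥ 1 and every ε > 0 there exists δ > 0 such that for every normal matrix α ∈ M_m(ℂ) with ‖α‖ = 1 and every g ∈ GL_m(ℂ), if the matrix β = g·α·g⁻¹ satisfies ‖ββᴴ − βᴴβ‖ < δ, then ‖β‖² − 1 < ε, where ‖·‖ is the Frobenius norm. -/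
set_option maxHeartbeats 1000000

open Matrix


lemma schur_aux : ∀ (n : ℕ) (A : Matrix (Fin n) (Fin n) ℂ),
    ∃ U : Matrix (Fin n) (Fin n) ℂ, star U * U = 1 ∧
      ∀ i j : Fin n, j < i → (star U * A * U) i j = 0 := by
  intro n
  induction n with
  | zero => exact fun A => ⟨1, by simp, fun i => i.elim0⟩
  | succ n IH =>
    intro A
    -- eigenvector
    obtain ⟨μ, hμ⟩ := Module.End.exists_eigenvalue (Matrix.mulVecLin A)
    obtain ⟨v, hv⟩ := hμ.exists_hasEigenvector
    have hv0 : v ≠ 0 := hv.right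
    have hveq : A.mulVec v = μ • v := hv.apply_eq_smul
    -- normalize in EuclideanSpace
    set E := EuclideanSpace ℂ (Fin (n+1))
    set w : E := (WithLp.equiv 2 _).symm v with hw
    have hwv : ∀ i, w i = v i := fun i => rfl
    have hwne : ‖w‖ ≠ 0 := by
      rw [ne_eq, norm_eq_zero]
      intro h
      apply hv0
      ext i
      have := congrFun (congrArg (WithLp.equiv 2 _) h) i
      simpa [hw] using congrFun (congrArg (fun z : E => (z : Fin (n+1) → ℂ)) h) i
    set c : ℂ := (‖w‖ : ℂ)⁻¹ with hc
    set u : E := c • w with hu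
    have hui : ∀ i, u i = c * v i := fun i => rfl
    have hunorm : ‖u‖ = 1 := by
      rw [hu, norm_smul, hc]
      simp [norm_inv, hwne, inv_mul_cancel₀ hwne]
      rw [abs_norm, inv_mul_cancel₀ hwne]
    have huv : A.mulVec (fun i => u i) = fun i => μ * u i := by
      funext i
      have : (fun i => u i) = c • v := by funext j; exact hui j
      rw [this, Matrix.mulVec_smul, hveq]
      simp [hui, Pi.smul_apply, smul_eq_mul]
      ring
    -- orthonormal basis extension
    have hortho : Orthonormal ℂ (({0} : Set (Fin (n+1))).restrict (fun _ => u)) := by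
      constructor
      · intro i; exact hunorm
      · intro i j hij
        exfalso
        apply hij
        ext
        have hi := i.2; have hj := j.2
        simp only [Set.mem_singleton_iff] at hi hj
        rw [hi, hj]
    obtain ⟨b, hb⟩ := hortho.exists_orthonormalBasis_extension_of_card_eq
      (by simp only [E, finrank_euclideanSpace, Fintype.card_fin])
    have hb0 : b 0 = u := hb 0 rfl
    have hbON : ∀ i j, (inner ℂ (b i) (b j) : ℂ) = if i = j then 1 else 0 :=
      orthonormal_iff_ite.mp b.orthonormal
    have hinner : ∀ x y : E, (inner ℂ x y : ℂ) = ∑ p, (starRingEnd ℂ) (x p) * y p := by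
      intro x y
      rw [PiLp.inner_apply]
      simp [RCLike.inner_apply]
      exact Finset.sum_congr rfl fun _ _ => mul_comm _ _
    set U : Matrix (Fin (n+1)) (Fin (n+1)) ℂ := Matrix.of (fun i j => b j i) with hUdef
    have hUU : star U * U = 1 := by
      ext i j
      rw [Matrix.mul_apply, Matrix.one_apply]
      have : ∑ p, (star U) i p * U p j = ∑ p, (starRingEnd ℂ) (b i p) * b j p := by
        apply Finset.sum_congr rfl
        intro p _
        simp [hUdef, Matrix.star_apply]
      rw [this, ← hinner, hbON]
    set B := star U * A * U with hB
    have hBcol : ∀ i : Fin (n+1), i ≠ 0 → B i 0 = 0 := by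
      intro i hi
      have hAU : ∀ q, (A * U) q 0 = μ * u q := by
        intro q
        rw [Matrix.mul_apply]
        have : ∀ r, A q r * U r 0 = A q r * u r := by
          intro r; rw [hUdef]; simp [Matrix.of_apply, hb0]
        rw [Finset.sum_congr rfl (fun r _ => this r)]
        have := congrFun huv q
        simpa [Matrix.mulVec, dotProduct] using this
      rw [hB, Matrix.mul_assoc, Matrix.mul_apply]
      have : ∀ q, (star U) i q * (A * U) q 0 = μ * ((starRingEnd ℂ) (b i q) * b 0 q) := by
        intro q
        rw [hAU q]
        simp [hUdef, Matrix.star_apply, Matrix.of_apply, hb0]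
        ring
      rw [Finset.sum_congr rfl (fun q _ => this q), ← Finset.mul_sum, ← hinner, hbON]
      simp [hi]
    -- sub matrix
    set C : Matrix (Fin n) (Fin n) ℂ := Matrix.of (fun i j => B i.succ j.succ) with hC
    obtain ⟨V, hVV, hVtri⟩ := IH C
    set W : Matrix (Fin (n+1)) (Fin (n+1)) ℂ :=
      Matrix.of (Fin.cons (fun j => if j = 0 then 1 else 0)
        (fun i' => Fin.cons 0 (V i'))) with hW
    have hW00 : W 0 0 = 1 := by simp [hW]
    have hW0s : ∀ j : Fin n, W 0 j.succ = 0 := by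
      intro j; simp [hW, Fin.succ_ne_zero]
    have hWs0 : ∀ i : Fin n, W i.succ 0 = 0 := by
      intro i; simp [hW]
    have hWss : ∀ i j : Fin n, W i.succ j.succ = V i j := by
      intro i j; simp [hW]
    have hWW : star W * W = 1 := by
      ext i j
      rw [Matrix.mul_apply]
      have expand : ∑ p, (star W) i p * W p j
          = (starRingEnd ℂ) (W 0 i) * W 0 j
            + ∑ p : Fin n, (starRingEnd ℂ) (W p.succ i) * W p.succ j := by
        rw [Fin.sum_univ_succ]
        simp only [Matrix.star_apply, RCLike.star_def]
      rw [expand]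
      refine Fin.cases ?_ ?_ i <;> [skip; intro i'] <;> refine Fin.cases ?_ ?_ j
      · simp [hW00, Matrix.one_apply, hWs0]
      · intro j'
        simp [hW00, hW0s, hWs0, Matrix.one_apply, (Fin.succ_ne_zero j').symm]
      · simp [hW00, hW0s, hWs0, hWss, Matrix.one_apply, Fin.succ_ne_zero i']
      · intro j'
        simp only [hW0s, hWss, map_zero, zero_mul, zero_add]
        have key : ∑ p : Fin n, (starRingEnd ℂ) (V p i') * V p j'
            = (star V * V) i' j' := by
          rw [Matrix.mul_apply]
          exact Finset.sum_congr rfl (fun p _ => by simp [Matrix.star_apply])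
        rw [key, hVV, Matrix.one_apply, Matrix.one_apply]
        simp [Fin.succ_inj]
    -- triangularity of star W * B * W
    have hEtri : ∀ i j : Fin (n+1), j < i → (star W * B * W) i j = 0 := by
      intro i j hij
      rcases Fin.eq_zero_or_eq_succ i with rfl | ⟨i', rfl⟩
      · exact absurd hij (Fin.not_lt_zero j)
      rw [Matrix.mul_assoc, Matrix.mul_apply]
      rw [Fin.sum_univ_succ]
      have hrow : ∀ p : Fin n, (B * W) p.succ j = ∑ q : Fin n, C p q * W q.succ j := by
        intro p
        rw [Matrix.mul_apply, Fin.sum_univ_succ, hBcol p.succ (Fin.succ_ne_zero p), zero_mul,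
          zero_add]
        exact Finset.sum_congr rfl (fun q _ => by rw [hC]; rfl)
      have hstar0 : (star W) i'.succ 0 = 0 := by
        simp [Matrix.star_apply, hW0s]
      rw [show (star W) i'.succ 0 * (B * W) 0 j = 0 by rw [hstar0, zero_mul], zero_add]
      rcases Fin.eq_zero_or_eq_succ j with rfl | ⟨j', rfl⟩
      · apply Finset.sum_eq_zero
        intro p _
        rw [hrow p]
        have : ∀ q : Fin n, C p q * W q.succ 0 = 0 := fun q => by rw [hWs0, mul_zero]
        rw [Finset.sum_congr rfl (fun q _ => this q), Finset.sum_const_zero, mul_zero]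
      · have hj'i' : j' < i' := by rwa [Fin.succ_lt_succ_iff] at hij
        have : ∀ p : Fin n, (star W) i'.succ p.succ * (B * W) p.succ j'.succ
            = (star V) i' p * ((C * V) p j') := by
          intro p
          rw [hrow p]
          have h1 : (star W) i'.succ p.succ = (star V) i' p := by
            simp [Matrix.star_apply, hWss]
          have h2 : ∑ q : Fin n, C p q * W q.succ j'.succ = (C * V) p j' := by
            rw [Matrix.mul_apply]
            exact Finset.sum_congr rfl (fun q _ => by rw [hWss])
          rw [h1, h2]
        rw [Finset.sum_congr rfl (fun p _ => this p), ← Matrix.mul_apply]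
        have := hVtri i' j' hj'i'
        rwa [Matrix.mul_assoc] at this
    refine ⟨U * W, ?_, ?_⟩
    · rw [Matrix.star_mul, Matrix.mul_assoc, ← Matrix.mul_assoc (star U), hUU, Matrix.one_mul, hWW]
    · intro i j hij
      have : star (U * W) * A * (U * W) = star W * B * W := by
        rw [hB, Matrix.star_mul]
        noncomm_ring
      rw [this]
      exact hEtri i j hij

section Aux

open Finset

variable {n : ℕ}

lemma ite_nonneg' (P : Prop) [Decidable P] (x : ℝ) (hx : 0 ≤ x) :
    0 ≤ if P then x else 0 := by
  split_ifs <;> simp [hx]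

lemma fsq_nonneg (A : Matrix (Fin n) (Fin n) ℂ) :
    0 ≤ ∑ i, ∑ j, ‖A i j‖ ^ 2 :=
  Finset.sum_nonneg fun _ _ => Finset.sum_nonneg fun _ _ => sq_nonneg _

lemma frobNorm_nonneg (A : Matrix (Fin n) (Fin n) ℂ) : 0 ≤ frobNorm A :=
  Real.sqrt_nonneg _

lemma frobNorm_sq (A : Matrix (Fin n) (Fin n) ℂ) :
    frobNorm A ^ 2 = ∑ i, ∑ j, ‖A i j‖ ^ 2 :=
  Real.sq_sqrt (fsq_nonneg A)

lemma entry_le_frobNorm (A : Matrix (Fin n) (Fin n) ℂ) (i j : Fin n) :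
    ‖A i j‖ ≤ frobNorm A := by
  have h1 : ‖A i j‖ ^ 2 ≤ ∑ a, ∑ b, ‖A a b‖ ^ 2 := by
    calc ‖A i j‖ ^ 2 ≤ ∑ b, ‖A i b‖ ^ 2 :=
          Finset.single_le_sum (f := fun b => ‖A i b‖ ^ 2)
            (fun b _ => sq_nonneg _) (Finset.mem_univ j)
      _ ≤ ∑ a, ∑ b, ‖A a b‖ ^ 2 :=
          Finset.single_le_sum (f := fun a => ∑ b, ‖A a b‖ ^ 2)
            (fun a _ => Finset.sum_nonneg fun b _ => sq_nonneg _) (Finset.mem_univ i)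
  calc ‖A i j‖ = Real.sqrt (‖A i j‖ ^ 2) :=
        (Real.sqrt_sq (norm_nonneg _)).symm
    _ ≤ frobNorm A := Real.sqrt_le_sqrt h1

lemma fsq_eq_trace (A : Matrix (Fin n) (Fin n) ℂ) :
    ∑ i, ∑ j, ‖A i j‖ ^ 2 = (Matrix.trace (Aᴴ * A)).re := by
  rw [Matrix.trace, Complex.re_sum]
  rw [Finset.sum_comm]
  apply Finset.sum_congr rfl
  intro j _
  rw [Matrix.diag_apply, Matrix.mul_apply, Complex.re_sum]
  apply Finset.sum_congr rfl
  intro i _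
  rw [Matrix.conjTranspose_apply, RCLike.star_def, mul_comm, Complex.mul_conj, ← Complex.sq_norm]
  simp [← Complex.ofReal_pow]

lemma fsq_conj_unitary (U A : Matrix (Fin n) (Fin n) ℂ) (hU : star U * U = 1) :
    ∑ i, ∑ j, ‖(star U * A * U) i j‖ ^ 2 = ∑ i, ∑ j, ‖A i j‖ ^ 2 := by
  have hU' : U * star U = 1 := mul_eq_one_comm.mp hU
  rw [fsq_eq_trace, fsq_eq_trace]
  congr 1
  have hstar : (star U * A * U)ᴴ = star U * Aᴴ * U := by
    rw [Matrix.star_eq_conjTranspose]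
    simp [Matrix.conjTranspose_mul, Matrix.mul_assoc]
  rw [hstar]
  rw [Matrix.star_eq_conjTranspose] at hU hU' ⊢
  have : Uᴴ * Aᴴ * U * (Uᴴ * A * U) = Uᴴ * (Aᴴ * A) * U := by
    calc Uᴴ * Aᴴ * U * (Uᴴ * A * U) = Uᴴ * Aᴴ * (U * Uᴴ) * A * U := by
          simp only [Matrix.mul_assoc]
      _ = Uᴴ * (Aᴴ * A) * U := by rw [hU']; simp [Matrix.mul_assoc]
  rw [this, Matrix.trace_mul_comm, ← Matrix.mul_assoc, hU', Matrix.one_mul]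

lemma frobNorm_conj_unitary (U A : Matrix (Fin n) (Fin n) ℂ) (hU : star U * U = 1) :
    frobNorm (star U * A * U) = frobNorm A := by
  unfold frobNorm
  rw [fsq_conj_unitary U A hU]

/-- The key combinatorial (Henrici-type) inequality for upper triangular matrices. -/
lemma tri_bound (T : Matrix (Fin n) (Fin n) ℂ)
    (htri : ∀ i j : Fin n, j < i → T i j = 0) :
    (∑ i, ∑ j, ‖T i j‖ ^ 2) ≤
      (∑ i, ‖T i i‖ ^ 2) + (n : ℝ) ^ 2 * frobNorm (Tᴴ * T - T * Tᴴ) := by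
  set M := Tᴴ * T - T * Tᴴ with hM
  set c : Fin n → Fin n → ℝ := fun a b => ‖T a b‖ ^ 2 with hc
  have hc0 : ∀ a b, 0 ≤ c a b := fun a b => sq_nonneg _
  have hcz : ∀ a b, b < a → c a b = 0 := by
    intro a b h; rw [hc]; simp [htri a b h]
  set fn := frobNorm M with hfn
  have hfn0 : 0 ≤ fn := frobNorm_nonneg M
  -- diagonal entries of M
  have hdiag : ∀ i, (M i i).re = (∑ p, c p i) - (∑ q, c i q) := by
    intro i
    rw [hM]
    rw [Matrix.sub_apply, Complex.sub_re]
    congr 1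
    · rw [Matrix.mul_apply, Complex.re_sum]
      apply Finset.sum_congr rfl
      intro p _
      rw [Matrix.conjTranspose_apply, RCLike.star_def, mul_comm, Complex.mul_conj,
        ← Complex.sq_norm]
      simp [hc, ← Complex.ofReal_pow]
    · rw [Matrix.mul_apply, Complex.re_sum]
      apply Finset.sum_congr rfl
      intro q _
      rw [Matrix.conjTranspose_apply, RCLike.star_def, Complex.mul_conj, ← Complex.sq_norm]
      simp [hc, ← Complex.ofReal_pow]
  -- partial trace identity
  have hkey : ∀ k : Fin n,
      ∑ a ∈ univ.filter (fun a => a ≤ k), ∑ b ∈ univ.filter (fun b => k < b), c a b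
        = - ∑ i ∈ univ.filter (fun i => i ≤ k), (M i i).re := by
    intro k
    have hsplit : ∀ f : Fin n → ℝ,
        ∑ b, f b = (∑ b ∈ univ.filter (fun b => b ≤ k), f b)
          + ∑ b ∈ univ.filter (fun b => k < b), f b := by
      intro f
      rw [← Finset.sum_filter_add_sum_filter_not univ (fun b => b ≤ k) f]
      congr 1
      apply Finset.sum_congr _ (fun _ _ => rfl)
      apply Finset.filter_congr
      intro b _
      simp [not_le]
    rw [Finset.sum_congr rfl (fun i _ => hdiag i), Finset.sum_sub_distrib]
    have h1 : ∑ i ∈ univ.filter (fun i => i ≤ k), ∑ p, c p i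
        = ∑ a ∈ univ.filter (fun a => a ≤ k), ∑ b ∈ univ.filter (fun b => b ≤ k), c a b := by
      rw [Finset.sum_comm]
      rw [hsplit (fun p => ∑ i ∈ univ.filter (fun i => i ≤ k), c p i)]
      have hz : ∑ p ∈ univ.filter (fun p => k < p),
          ∑ i ∈ univ.filter (fun i => i ≤ k), c p i = 0 := by
        apply Finset.sum_eq_zero
        intro p hp
        apply Finset.sum_eq_zero
        intro i hi
        simp only [Finset.mem_filter] at hp hi
        exact hcz p i (lt_of_le_of_lt hi.2 hp.2)
      rw [hz, add_zero]
    have h2 : ∑ i ∈ univ.filter (fun i => i ≤ k), ∑ q, c i q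
        = (∑ a ∈ univ.filter (fun a => a ≤ k), ∑ b ∈ univ.filter (fun b => b ≤ k), c a b)
          + ∑ a ∈ univ.filter (fun a => a ≤ k), ∑ b ∈ univ.filter (fun b => k < b), c a b := by
      rw [← Finset.sum_add_distrib]
      apply Finset.sum_congr rfl
      intro a _
      exact hsplit (fun q => c a q)
    rw [h1, h2]
    ring
  -- bound on each partial block sum
  have hblock : ∀ k : Fin n,
      ∑ a ∈ univ.filter (fun a => a ≤ k), ∑ b ∈ univ.filter (fun b => k < b), c a b
        ≤ (n : ℝ) * fn := by
    intro k
    rw [hkey k]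
    have : ∀ i ∈ univ.filter (fun i : Fin n => i ≤ k), -fn ≤ (M i i).re := by
      intro i _
      have h1 : |(M i i).re| ≤ ‖M i i‖ := Complex.abs_re_le_norm _
      have h2 : ‖M i i‖ ≤ fn := entry_le_frobNorm M i i
      have := neg_abs_le (M i i).re
      linarith
    have hsum : ∑ i ∈ univ.filter (fun i : Fin n => i ≤ k), (-fn)
        ≤ ∑ i ∈ univ.filter (fun i : Fin n => i ≤ k), (M i i).re :=
      Finset.sum_le_sum this
    rw [Finset.sum_const] at hsum
    have hcard : ((univ.filter (fun i : Fin n => i ≤ k)).card : ℝ) ≤ (n : ℝ) := by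
      have := Finset.card_filter_le (univ : Finset (Fin n)) (fun i => i ≤ k)
      have hn : (univ : Finset (Fin n)).card = n := Finset.card_fin n
      exact_mod_cast le_trans this (le_of_eq hn)
    have hsum' : ((univ.filter (fun i : Fin n => i ≤ k)).card : ℝ) * (-fn)
        ≤ ∑ i ∈ univ.filter (fun i : Fin n => i ≤ k), (M i i).re := by
      rw [← nsmul_eq_mul]
      exact hsum
    have e : ((univ.filter (fun i : Fin n => i ≤ k)).card : ℝ) * (-fn)
        = -(((univ.filter (fun i : Fin n => i ≤ k)).card : ℝ) * fn) := by ring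
    have hmul : ((univ.filter (fun i : Fin n => i ≤ k)).card : ℝ) * fn ≤ (n : ℝ) * fn :=
      mul_le_mul_of_nonneg_right hcard hfn0
    linarith
  -- strict upper part bounded by sum over k of block sums
  have hupper : ∑ a, ∑ b, (if a < b then c a b else 0)
      ≤ (n : ℝ) * ((n : ℝ) * fn) := by
    have step1 : ∀ k : Fin n,
        ∑ a ∈ univ.filter (fun a => a ≤ k), ∑ b ∈ univ.filter (fun b => k < b), c a b
          = ∑ a, ∑ b, (if a ≤ k ∧ k < b then c a b else 0) := by
      intro k
      rw [Finset.sum_filter]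
      apply Finset.sum_congr rfl
      intro a _
      by_cases ha : a ≤ k
      · simp only [ha, if_true, true_and]
        rw [Finset.sum_filter]
      · simp [ha]
    have per : ∀ a b : Fin n, (if a < b then c a b else 0)
        ≤ ∑ k : Fin n, (if a ≤ k ∧ k < b then c a b else 0) := by
      intro a b
      by_cases hab : a < b
      · have h1 : (fun k : Fin n => if a ≤ k ∧ k < b then c a b else 0) a = c a b := by
          simp [hab]
        have h2 := Finset.single_le_sum
          (f := fun k : Fin n => if a ≤ k ∧ k < b then c a b else 0)
          (fun k _ => ite_nonneg' _ _ (hc0 a b)) (Finset.mem_univ a)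
        rw [show (if a ≤ a ∧ a < b then c a b else 0) = c a b from h1] at h2
        simpa [hab] using h2
      · simp only [hab, if_false]
        exact Finset.sum_nonneg fun k _ => ite_nonneg' _ _ (hc0 a b)
    have step2 : ∑ a, ∑ b, (if a < b then c a b else 0)
        ≤ ∑ k : Fin n, ∑ a, ∑ b, (if a ≤ k ∧ k < b then c a b else 0) := by
      calc ∑ a, ∑ b, (if a < b then c a b else 0)
          ≤ ∑ a, ∑ b, ∑ k : Fin n, (if a ≤ k ∧ k < b then c a b else 0) :=
            Finset.sum_le_sum fun a _ => Finset.sum_le_sum fun b _ => per a b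
        _ = ∑ a, ∑ k : Fin n, ∑ b, (if a ≤ k ∧ k < b then c a b else 0) :=
            Finset.sum_congr rfl fun a _ => Finset.sum_comm
        _ = ∑ k : Fin n, ∑ a, ∑ b, (if a ≤ k ∧ k < b then c a b else 0) := Finset.sum_comm
    calc ∑ a, ∑ b, (if a < b then c a b else 0)
        ≤ ∑ k : Fin n, ∑ a, ∑ b, (if a ≤ k ∧ k < b then c a b else 0) := step2
      _ = ∑ k : Fin n, ∑ a ∈ univ.filter (fun a => a ≤ k),
            ∑ b ∈ univ.filter (fun b => k < b), c a b := by
          exact Finset.sum_congr rfl fun k _ => (step1 k).symm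
      _ ≤ ∑ k : Fin n, (n : ℝ) * fn := Finset.sum_le_sum fun k _ => hblock k
      _ = (n : ℝ) * ((n : ℝ) * fn) := by
          rw [Finset.sum_const, Finset.card_fin, nsmul_eq_mul]
  -- trichotomy decomposition
  have hdecomp : ∑ a, ∑ b, c a b
      = (∑ a, c a a) + ∑ a, ∑ b, (if a < b then c a b else 0) := by
    have : ∀ a b : Fin n, c a b = (if a = b then c a b else 0) + (if a < b then c a b else 0) := by
      intro a b
      rcases lt_trichotomy a b with h | h | h
      · simp [h, ne_of_lt h]
      · simp [h]
      · simp [hcz a b h, ne_of_gt h, not_lt_of_gt h]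
    calc ∑ a, ∑ b, c a b
        = ∑ a, ∑ b, ((if a = b then c a b else 0) + (if a < b then c a b else 0)) := by
          exact Finset.sum_congr rfl fun a _ => Finset.sum_congr rfl fun b _ => this a b
      _ = ∑ a, ((∑ b, (if a = b then c a b else 0)) + ∑ b, (if a < b then c a b else 0)) := by
          exact Finset.sum_congr rfl fun a _ => Finset.sum_add_distrib
      _ = (∑ a, c a a) + ∑ a, ∑ b, (if a < b then c a b else 0) := by
          rw [Finset.sum_add_distrib]
          congr 1
          refine Finset.sum_congr rfl fun a _ => ?_
          rw [Finset.sum_ite_eq univ a (fun b => c a b)]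
          simp
  have : ∑ a, ∑ b, c a b ≤ (∑ a, c a a) + (n : ℝ) * ((n : ℝ) * fn) := by
    rw [hdecomp]
    linarith [hupper]
  calc ∑ i, ∑ j, ‖T i j‖ ^ 2 = ∑ a, ∑ b, c a b := rfl
    _ ≤ (∑ a, c a a) + (n : ℝ) * ((n : ℝ) * fn) := this
    _ = (∑ i, ‖T i i‖ ^ 2) + (n : ℝ) ^ 2 * fn := by rw [hc]; ring

open Polynomial in
lemma charpoly_conj (P Q A : Matrix (Fin n) (Fin n) ℂ) (hPQ : P * Q = 1) :
    (P * A * Q).charpoly = A.charpoly := by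
  have hcm : charmatrix (P * A * Q) = P.map C * charmatrix A * Q.map C := by
    rw [charmatrix, charmatrix]
    simp only [RingHom.mapMatrix_apply]
    have hmapmul : (P * A * Q).map (C : ℂ →+* ℂ[X])
        = P.map C * A.map C * Q.map C := by
      rw [← Matrix.map_mul, ← Matrix.map_mul]
    have hPQC : P.map (C : ℂ →+* ℂ[X]) * Q.map C = 1 := by
      rw [← Matrix.map_mul, hPQ, Matrix.map_one]
      · simp
      · simp
    have hcomm : Matrix.scalar (Fin n) (X : ℂ[X]) * Q.map C
        = Q.map C * Matrix.scalar (Fin n) (X : ℂ[X]) :=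
      (Matrix.scalar_commute (X : ℂ[X]) (fun r' => Commute.all _ _) (Q.map C)).eq
    rw [hmapmul, Matrix.mul_sub, Matrix.sub_mul]
    congr 1
    rw [Matrix.mul_assoc, hcomm, ← Matrix.mul_assoc, hPQC, Matrix.one_mul]
  rw [Matrix.charpoly, Matrix.charpoly, hcm, Matrix.det_mul, Matrix.det_mul]
  have hdet : (P.map (C : ℂ →+* ℂ[X])).det * (Q.map C).det = 1 := by
    rw [← Matrix.det_mul, ← Matrix.map_mul, hPQ, Matrix.map_one, Matrix.det_one]
    · simp
    · simp
  calc (P.map C).det * (charmatrix A).det * (Q.map C).det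
      = (P.map C).det * (Q.map C).det * (charmatrix A).det := by ring
    _ = (charmatrix A).det := by rw [hdet, one_mul]

open Polynomial in
lemma diag_sq_sum_eq (T S : Matrix (Fin n) (Fin n) ℂ)
    (hT : ∀ i j : Fin n, j < i → T i j = 0) (hS : ∀ i j : Fin n, j < i → S i j = 0)
    (hchar : T.charpoly = S.charpoly) :
    ∑ i, ‖T i i‖ ^ 2 = ∑ i, ‖S i i‖ ^ 2 := by
  have hTc : T.charpoly = ∏ i, (X - C (T i i)) :=
    Matrix.charpoly_of_upperTriangular T (fun i j h => hT i j h)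
  have hSc : S.charpoly = ∏ i, (X - C (S i i)) :=
    Matrix.charpoly_of_upperTriangular S (fun i j h => hS i j h)
  have hprod : ∏ i, (X - C (T i i)) = ∏ i, (X - C (S i i)) := by
    rw [← hTc, ← hSc, hchar]
  have hroots : Multiset.map (fun i => T i i) Finset.univ.val
      = Multiset.map (fun i => S i i) Finset.univ.val := by
    have h1 : (Multiset.map (fun a => X - C a)
        (Multiset.map (fun i => T i i) Finset.univ.val)).prod.roots
        = Multiset.map (fun i => T i i) Finset.univ.val :=
      roots_multiset_prod_X_sub_C _
    have h2 : (Multiset.map (fun a => X - C a)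
        (Multiset.map (fun i => S i i) Finset.univ.val)).prod.roots
        = Multiset.map (fun i => S i i) Finset.univ.val :=
      roots_multiset_prod_X_sub_C _
    rw [← h1, ← h2]
    congr 1
    rw [Multiset.map_map, Multiset.map_map]
    rw [show ((fun a => X - C a) ∘ fun i => T i i) = fun i => X - C (T i i) from rfl]
    rw [show ((fun a => X - C a) ∘ fun i => S i i) = fun i => X - C (S i i) from rfl]
    rw [← Finset.prod_eq_multiset_prod, ← Finset.prod_eq_multiset_prod]
    exact hprod
  rw [Finset.sum_eq_multiset_sum, Finset.sum_eq_multiset_sum]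
  have : ∀ f : Fin n → ℂ, Multiset.map (fun i => ‖f i‖ ^ 2) Finset.univ.val
      = Multiset.map (fun z => ‖z‖ ^ 2) (Multiset.map f Finset.univ.val) := by
    intro f
    rw [Multiset.map_map]
    rfl
  rw [this, this, hroots]

end Aux

/-- Lemma 8.3 in the adjoint model: for every `ε > 0` there is `δ > 0` such
that for every normal matrix `α` of Frobenius norm `1` and every `g ∈ GL_m(ℂ)`,
if `β = g α g⁻¹` satisfies `‖β βᴴ - βᴴ β‖ < δ`, then `‖β‖² - 1 < ε`. -/
theorem stmt_4 (m : ℕ) (hm : 1 ≤ m) :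
    ∀ ε : ℝ, 0 < ε → ∃ δ : ℝ, 0 < δ ∧
      ∀ α : Matrix (Fin m) (Fin m) ℂ, α * αᴴ = αᴴ * α → frobNorm α = 1 →
      ∀ g : (Matrix (Fin m) (Fin m) ℂ)ˣ,
      ∀ β : Matrix (Fin m) (Fin m) ℂ,
        β = (g : Matrix (Fin m) (Fin m) ℂ) * α * (↑g⁻¹ : Matrix (Fin m) (Fin m) ℂ) →
        frobNorm (β * βᴴ - βᴴ * β) < δ →
        frobNorm β ^ 2 - 1 < ε := by
  intro ε hε
  have hm2 : (0 : ℝ) < (m : ℝ) ^ 2 := by positivity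
  refine ⟨ε / (m : ℝ) ^ 2, div_pos hε hm2, ?_⟩
  intro α hα hαnorm g β hβ hcomm
  -- Schur for β and for α
  obtain ⟨U, hUU, hUtri⟩ := schur_aux m β
  obtain ⟨V, hVV, hVtri⟩ := schur_aux m α
  set Tβ := star U * β * U with hTβ
  set Sα := star V * α * V with hSα
  have hU' : U * star U = 1 := mul_eq_one_comm.mp hUU
  have hV' : V * star V = 1 := mul_eq_one_comm.mp hVV
  -- charpoly chain
  have hcharTβ : Tβ.charpoly = β.charpoly := by
    rw [hTβ, Matrix.mul_assoc]
    rw [show star U * (β * U) = star U * β * U from (Matrix.mul_assoc _ _ _).symm]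
    exact charpoly_conj (star U) U β (mul_eq_one_comm.mp hU')
  have hcharβ : β.charpoly = α.charpoly := by
    rw [hβ]
    exact charpoly_conj _ _ α g.mul_inv
  have hcharSα : Sα.charpoly = α.charpoly := by
    rw [hSα]
    exact charpoly_conj (star V) V α (mul_eq_one_comm.mp hV')
  -- diagonal sums agree
  have hdiag : ∑ i, ‖Tβ i i‖ ^ 2 = ∑ i, ‖Sα i i‖ ^ 2 :=
    diag_sq_sum_eq Tβ Sα hUtri hVtri (by rw [hcharTβ, hcharβ, ← hcharSα])
  -- diag of Sα bounded by fsq α = 1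
  have hfsqα : ∑ i, ∑ j, ‖α i j‖ ^ 2 = 1 := by
    have := frobNorm_sq α
    rw [hαnorm] at this
    simpa using this.symm
  have hSαfsq : ∑ i, ∑ j, ‖Sα i j‖ ^ 2 = 1 := by
    rw [hSα, fsq_conj_unitary V α hVV, hfsqα]
  have hdiagSα : ∑ i, ‖Sα i i‖ ^ 2 ≤ 1 := by
    rw [← hSαfsq]
    apply Finset.sum_le_sum
    intro i _
    exact Finset.single_le_sum (f := fun j => ‖Sα i j‖ ^ 2)
      (fun j _ => sq_nonneg _) (Finset.mem_univ i)
  -- commutator norm for Tβ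
  have hcommTβ : Tβᴴ * Tβ - Tβ * Tβᴴ = star U * (βᴴ * β - β * βᴴ) * U := by
    have hTβH : Tβᴴ = star U * βᴴ * U := by
      rw [hTβ, Matrix.star_eq_conjTranspose]
      simp [Matrix.conjTranspose_mul, Matrix.mul_assoc]
    rw [hTβH, hTβ]
    rw [Matrix.star_eq_conjTranspose] at hU' ⊢
    rw [Matrix.mul_sub, Matrix.sub_mul]
    congr 1
    · calc Uᴴ * βᴴ * U * (Uᴴ * β * U) = Uᴴ * βᴴ * (U * Uᴴ) * β * U := by
            simp only [Matrix.mul_assoc]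
        _ = Uᴴ * (βᴴ * β) * U := by rw [hU']; simp [Matrix.mul_assoc]
    · calc Uᴴ * β * U * (Uᴴ * βᴴ * U) = Uᴴ * β * (U * Uᴴ) * βᴴ * U := by
            simp only [Matrix.mul_assoc]
        _ = Uᴴ * (β * βᴴ) * U := by rw [hU']; simp [Matrix.mul_assoc]
  have hfnTβ : frobNorm (Tβᴴ * Tβ - Tβ * Tβᴴ) = frobNorm (β * βᴴ - βᴴ * β) := by
    rw [hcommTβ, frobNorm_conj_unitary U _ hUU]
    have : βᴴ * β - β * βᴴ = -(β * βᴴ - βᴴ * β) := (neg_sub _ _).symm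
    rw [this]
    unfold frobNorm
    congr 1
    apply Finset.sum_congr rfl
    intro i _
    apply Finset.sum_congr rfl
    intro j _
    simp only [Matrix.neg_apply, Matrix.sub_apply, neg_sub]
    rw [norm_sub_rev]
  -- main estimate
  have hmain : frobNorm β ^ 2 ≤ 1 + (m : ℝ) ^ 2 * frobNorm (β * βᴴ - βᴴ * β) := by
    have h1 : frobNorm β ^ 2 = ∑ i, ∑ j, ‖Tβ i j‖ ^ 2 := by
      rw [frobNorm_sq, hTβ, fsq_conj_unitary U β hUU]
    have h2 := tri_bound Tβ hUtri
    rw [hfnTβ] at h2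
    calc frobNorm β ^ 2 = ∑ i, ∑ j, ‖Tβ i j‖ ^ 2 := h1
      _ ≤ (∑ i, ‖Tβ i i‖ ^ 2) + (m : ℝ) ^ 2 * frobNorm (β * βᴴ - βᴴ * β) := h2
      _ ≤ 1 + (m : ℝ) ^ 2 * frobNorm (β * βᴴ - βᴴ * β) := by
          rw [hdiag] at *
          linarith [hdiagSα]
  have : (m : ℝ) ^ 2 * frobNorm (β * βᴴ - βᴴ * β) < (m : ℝ) ^ 2 * (ε / (m : ℝ) ^ 2) :=
    mul_lt_mul_of_pos_left hcomm hm2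
  rw [mul_div_cancel₀ ε (ne_of_gt hm2)] at this
  linarith
end

section
/- A matrix α ∈ M_m(ℂ) satisfies ‖g·α·g⁻¹‖ ≥ ‖α‖ for every g ∈ GL_m(ℂ) (i.e. α has minimal Frobenius norm in its conjugation orbit) if and only if α is normal, i.e. ααᴴ = αᴴα. -/
open Matrix

variable {m : ℕ}


noncomputable def F (A : Matrix (Fin m) (Fin m) ℂ) : ℝ :=
  ∑ i, ∑ j, ‖A i j‖ ^ 2

lemma F_nonneg (A : Matrix (Fin m) (Fin m) ℂ) : 0 ≤ F A :=
  Finset.sum_nonneg fun _ _ => Finset.sum_nonneg fun _ _ => by positivity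

lemma trace_mul_conjTranspose (A : Matrix (Fin m) (Fin m) ℂ) :
    trace (A * Aᴴ) = (F A : ℂ) := by
  simp only [trace, diag, mul_apply, conjTranspose_apply, F]
  push_cast
  congr 1; ext i; congr 1; ext j
  rw [Complex.star_def, Complex.mul_conj]
  norm_cast
  rw [Complex.sq_norm]

lemma F_eq_zero_iff {A : Matrix (Fin m) (Fin m) ℂ} : F A = 0 ↔ A = 0 := by
  constructor
  · intro h
    ext i j
    have := (Finset.sum_eq_zero_iff_of_nonneg (fun i _ => Finset.sum_nonneg fun j _ => by positivity)).mp h i (Finset.mem_univ i)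
    have := (Finset.sum_eq_zero_iff_of_nonneg (fun j _ => by positivity)).mp this j (Finset.mem_univ j)
    simpa using this
  · intro h; simp [h, F]



lemma key_ineq {m : ℕ} (c : Fin m → Fin m → ℝ) (hc : ∀ i j, 0 ≤ c i j)
    (e : Fin m → ℝ) (he : ∀ i, 0 < e i)
    (hrc : ∀ i, ∑ j, c i j = ∑ j, c j i) :
    ∑ i, ∑ j, c i j ≤ ∑ i, ∑ j, c i j * (e i / e j) := by
  set L : Fin m → ℝ := fun i => Real.log (e i) with hL
  have step1 : ∀ i j, c i j * (1 + (L i - L j)) ≤ c i j * (e i / e j) := by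
    intro i j
    apply mul_le_mul_of_nonneg_left _ (hc i j)
    have h1 : Real.exp (L i - L j) = e i / e j := by
      rw [Real.exp_sub, Real.exp_log (he i), Real.exp_log (he j)]
    calc 1 + (L i - L j) ≤ Real.exp (L i - L j) := by
          have := Real.add_one_le_exp (L i - L j); linarith
      _ = e i / e j := h1
  have step2 : ∑ i, ∑ j, c i j * (1 + (L i - L j)) = ∑ i, ∑ j, c i j := by
    have expand : ∀ i j, c i j * (1 + (L i - L j)) = c i j + (c i j * L i - c i j * L j) := by
      intro i j; ring
    simp only [expand, Finset.sum_add_distrib, Finset.sum_sub_distrib]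
    have h1 : ∑ i, ∑ j, c i j * L j = ∑ i, ∑ j, c i j * L i := by
      rw [Finset.sum_comm]
      refine Finset.sum_congr rfl fun j _ => ?_
      rw [← Finset.sum_mul, ← hrc j, Finset.sum_mul]
      -- goal now: ∑ j, ∑ i, c j i * L j = ∑ i, ∑ j, c i j * L i  (alpha-equal)
    rw [h1]
    ring
  calc ∑ i, ∑ j, c i j = ∑ i, ∑ j, c i j * (1 + (L i - L j)) := step2.symm
    _ ≤ ∑ i, ∑ j, c i j * (e i / e j) :=
        Finset.sum_le_sum fun i _ => Finset.sum_le_sum fun j _ => step1 i j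

lemma row_col_norm (γ : Matrix (Fin m) (Fin m) ℂ) (hγ : γ * γᴴ = γᴴ * γ) (i : Fin m) :
    ∑ j, ‖γ i j‖ ^ 2 = ∑ j, ‖γ j i‖ ^ 2 := by
  have h1 : (γ * γᴴ) i i = ((∑ j, ‖γ i j‖ ^ 2 : ℝ) : ℂ) := by
    simp only [mul_apply, conjTranspose_apply]
    push_cast
    refine Finset.sum_congr rfl fun j _ => ?_
    rw [Complex.star_def, Complex.mul_conj]
    norm_cast
    rw [Complex.sq_norm]
  have h2 : (γᴴ * γ) i i = ((∑ j, ‖γ j i‖ ^ 2 : ℝ) : ℂ) := by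
    simp only [mul_apply, conjTranspose_apply]
    push_cast
    refine Finset.sum_congr rfl fun j _ => ?_
    rw [Complex.star_def, mul_comm, Complex.mul_conj]
    norm_cast
    rw [Complex.sq_norm]
  have : ((∑ j, ‖γ i j‖ ^ 2 : ℝ) : ℂ) = ((∑ j, ‖γ j i‖ ^ 2 : ℝ) : ℂ) := by
    rw [← h1, ← h2, hγ]
  exact_mod_cast this

lemma mul_star_self_eq (z : ℂ) : z * star z = ((‖z‖ ^ 2 : ℝ) : ℂ) := by
  rw [Complex.star_def, Complex.mul_conj]
  norm_cast
  rw [Complex.sq_norm]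

set_option maxHeartbeats 1000000 in
open scoped ComplexOrder in
lemma F_le_conj_of_normal (α : Matrix (Fin m) (Fin m) ℂ) (hα : α * αᴴ = αᴴ * α)
    (g : (Matrix (Fin m) (Fin m) ℂ)ˣ) :
    F α ≤ F ((g : Matrix (Fin m) (Fin m) ℂ) * α * (↑g⁻¹ : Matrix (Fin m) (Fin m) ℂ)) := by
  set G : Matrix (Fin m) (Fin m) ℂ := ↑g with hG
  set Gi : Matrix (Fin m) (Fin m) ℂ := ↑g⁻¹ with hGi
  have hGGi : G * Gi = 1 := g.mul_inv
  have hGiG : Gi * G = 1 := g.inv_mul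
  set H : Matrix (Fin m) (Fin m) ℂ := Gᴴ * G with hHdef
  have hH : H.IsHermitian := isHermitian_conjTranspose_mul_self G
  have hHpd : H.PosDef := by
    refine posDef_iff_dotProduct_mulVec.mpr ⟨hH, fun x hx => ?_⟩
    rw [hHdef, ← mulVec_mulVec, dotProduct_mulVec, vecMul_conjTranspose, star_star,
      dotProduct_star_self_pos_iff]
    intro hGx
    apply hx
    have h1 : Gi *ᵥ (G *ᵥ x) = x := by rw [mulVec_mulVec, hGiG, one_mulVec]
    rw [hGx, mulVec_zero] at h1
    exact h1.symm
  -- spectral data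
  set U : Matrix (Fin m) (Fin m) ℂ := ↑(hH.eigenvectorUnitary) with hU
  have hUU : Uᴴ * U = 1 := by
    simpa [hU, star_eq_conjTranspose] using
      (Matrix.mem_unitaryGroup_iff').mp hH.eigenvectorUnitary.2
  have hUU' : U * Uᴴ = 1 := by
    simpa [hU, star_eq_conjTranspose] using
      (Matrix.mem_unitaryGroup_iff).mp hH.eigenvectorUnitary.2
  set e : Fin m → ℝ := hH.eigenvalues with he
  have hepos : ∀ i, 0 < e i := fun i => hHpd.eigenvalues_pos i
  set E : Matrix (Fin m) (Fin m) ℂ := diagonal (fun i => (e i : ℂ)) with hE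
  set E' : Matrix (Fin m) (Fin m) ℂ := diagonal (fun i => ((e i : ℂ))⁻¹) with hE'
  have hspec : H = U * E * Uᴴ := by
    have hs := hH.spectral_theorem
    simp [star_eq_conjTranspose] at hs
    exact hs
  have hEE' : E * E' = 1 := by
    rw [hE, hE', diagonal_mul_diagonal]
    have hfun : (fun i => (e i : ℂ) * ((e i : ℂ))⁻¹) = fun _ => (1 : ℂ) :=
      funext fun i => mul_inv_cancel₀ (by exact_mod_cast (hepos i).ne')
    rw [hfun, diagonal_one]
  have hkey : Gi * Giᴴ = U * E' * Uᴴ := by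
    have h1 : H * (Gi * Giᴴ) = 1 := by
      rw [hHdef]
      calc Gᴴ * G * (Gi * Giᴴ) = Gᴴ * (G * Gi) * Giᴴ := by simp only [mul_assoc, mul_one, one_mul]
        _ = Gᴴ * Giᴴ := by rw [hGGi]; simp only [mul_assoc, mul_one, one_mul]
        _ = (Gi * G)ᴴ := (conjTranspose_mul _ _).symm
        _ = 1 := by rw [hGiG, conjTranspose_one]
    have h2 : H * (U * E' * Uᴴ) = 1 := by
      rw [hspec]
      calc U * E * Uᴴ * (U * E' * Uᴴ) = U * E * (Uᴴ * U) * E' * Uᴴ := by simp only [mul_assoc, mul_one, one_mul]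
        _ = U * (E * E') * Uᴴ := by rw [hUU]; simp only [mul_assoc, mul_one, one_mul]
        _ = U * Uᴴ := by rw [hEE']; simp only [mul_assoc, mul_one, one_mul]
        _ = 1 := hUU'
    have hunit : IsUnit H.det := (isUnit_iff_isUnit_det H).mp hHpd.isUnit
    calc Gi * Giᴴ = (H⁻¹ * H) * (Gi * Giᴴ) := by rw [nonsing_inv_mul _ hunit, one_mul]
      _ = H⁻¹ * (H * (Gi * Giᴴ)) := by simp only [mul_assoc, mul_one, one_mul]
      _ = H⁻¹ * (H * (U * E' * Uᴴ)) := by rw [h1, h2]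
      _ = (H⁻¹ * H) * (U * E' * Uᴴ) := by simp only [mul_assoc, mul_one, one_mul]
      _ = U * E' * Uᴴ := by rw [nonsing_inv_mul _ hunit, one_mul]
  set γ : Matrix (Fin m) (Fin m) ℂ := Uᴴ * α * U with hγdef
  have hγconj : γᴴ = Uᴴ * αᴴ * U := by
    rw [hγdef]
    simp only [conjTranspose_mul, conjTranspose_conjTranspose]
    simp only [mul_assoc, mul_one, one_mul]
  have hγnormal : γ * γᴴ = γᴴ * γ := by
    rw [hγconj, hγdef]
    calc Uᴴ * α * U * (Uᴴ * αᴴ * U) = Uᴴ * α * (U * Uᴴ) * αᴴ * U := by simp only [mul_assoc, mul_one, one_mul]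
      _ = Uᴴ * (α * αᴴ) * U := by rw [hUU']; simp only [mul_assoc, mul_one, one_mul]
      _ = Uᴴ * (αᴴ * α) * U := by rw [hα]
      _ = Uᴴ * αᴴ * (U * Uᴴ) * α * U := by rw [hUU']; simp only [mul_assoc, mul_one, one_mul]
      _ = Uᴴ * αᴴ * U * (Uᴴ * α * U) := by simp only [mul_assoc, mul_one, one_mul]
  have hFγ : F γ = F α := by
    have h1 : ((F γ : ℝ) : ℂ) = ((F α : ℝ) : ℂ) := by
      rw [← trace_mul_conjTranspose, ← trace_mul_conjTranspose]
      rw [hγconj]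
      calc trace (γ * (Uᴴ * αᴴ * U))
          = trace ((Uᴴ * α * U) * (Uᴴ * αᴴ * U)) := by rw [hγdef]
        _ = trace ((Uᴴ * (α * (U * Uᴴ) * αᴴ)) * U) := by congr 1; simp only [mul_assoc, mul_one, one_mul]
        _ = trace (U * (Uᴴ * (α * (U * Uᴴ) * αᴴ))) := trace_mul_comm _ _
        _ = trace ((U * Uᴴ) * (α * (U * Uᴴ) * αᴴ)) := by congr 1; simp only [mul_assoc, mul_one, one_mul]
        _ = trace (α * αᴴ) := by rw [hUU']; simp
    exact_mod_cast h1
  have hβconj : (G * α * Gi)ᴴ = Giᴴ * αᴴ * Gᴴ := by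
    simp only [conjTranspose_mul]
    simp only [mul_assoc, mul_one, one_mul]
  have htrace : ((F (G * α * Gi) : ℝ) : ℂ) = trace (γ * E' * γᴴ * E) := by
    rw [← trace_mul_conjTranspose, hβconj]
    calc trace (G * α * Gi * (Giᴴ * αᴴ * Gᴴ))
        = trace (G * (α * (Gi * Giᴴ) * αᴴ * Gᴴ)) := by congr 1; simp only [mul_assoc, mul_one, one_mul]
      _ = trace ((α * (Gi * Giᴴ) * αᴴ * Gᴴ) * G) := trace_mul_comm _ _
      _ = trace (α * (Gi * Giᴴ) * αᴴ * (Gᴴ * G)) := by congr 1; simp only [mul_assoc, mul_one, one_mul]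
      _ = trace (α * (U * E' * Uᴴ) * αᴴ * (U * E * Uᴴ)) := by rw [hkey, ← hHdef, hspec]
      _ = trace ((α * (U * E' * Uᴴ) * αᴴ * (U * E)) * Uᴴ) := by congr 1; simp only [mul_assoc, mul_one, one_mul]
      _ = trace (Uᴴ * (α * (U * E' * Uᴴ) * αᴴ * (U * E))) := trace_mul_comm _ _
      _ = trace (γ * E' * γᴴ * E) := by rw [hγdef, hγconj]; congr 1; simp only [mul_assoc, mul_one, one_mul]
  have hentry : trace (γ * E' * γᴴ * E) =
      ((∑ i, ∑ j, ‖γ i j‖ ^ 2 * (e i / e j) : ℝ) : ℂ) := by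
    have hassoc : γ * E' * γᴴ * E = (γ * E') * (γᴴ * E) := by simp only [mul_assoc, mul_one, one_mul]
    have hdiag : ∀ i, ((γ * E') * (γᴴ * E)) i i =
        ((∑ j, ‖γ i j‖ ^ 2 * (e i / e j) : ℝ) : ℂ) := by
      intro i
      rw [mul_apply]
      push_cast
      refine Finset.sum_congr rfl fun j _ => ?_
      rw [hE', hE, mul_diagonal, mul_diagonal, conjTranspose_apply]
      calc γ i j * ((e j : ℂ))⁻¹ * (star (γ i j) * (e i : ℂ))
          = (γ i j * star (γ i j)) * ((e i : ℂ) / (e j : ℂ)) := by ring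
        _ = ((‖γ i j‖ ^ 2 : ℝ) : ℂ) * ((e i : ℂ) / (e j : ℂ)) := by
            rw [mul_star_self_eq]
        _ = (‖γ i j‖ ^ 2 : ℂ) * ((e i : ℂ) / (e j : ℂ)) := by push_cast; ring
    rw [hassoc, trace]
    push_cast
    exact Finset.sum_congr rfl fun i _ => by
      have := hdiag i
      push_cast at this
      exact this
  have hc : F (G * α * Gi) = ∑ i, ∑ j, ‖γ i j‖ ^ 2 * (e i / e j) := by
    have := htrace.trans hentry
    exact_mod_cast this
  have hFγdef : F γ = ∑ i, ∑ j, ‖γ i j‖ ^ 2 := rfl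
  rw [hc, ← hFγ, hFγdef]
  exact key_ineq (fun i j => ‖γ i j‖ ^ 2) (fun i j => by positivity) e hepos
    (fun i => row_col_norm γ hγnormal i)

open NormedSpace in
set_option maxHeartbeats 1000000 in
lemma normal_of_min (α : Matrix (Fin m) (Fin m) ℂ)
    (hmin : ∀ g : (Matrix (Fin m) (Fin m) ℂ)ˣ,
      F α ≤ F ((g : Matrix (Fin m) (Fin m) ℂ) * α * (↑g⁻¹ : Matrix (Fin m) (Fin m) ℂ))) :
    α * αᴴ = αᴴ * α := by
  letI : NormedRing (Matrix (Fin m) (Fin m) ℂ) := Matrix.linftyOpNormedRing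
  letI : NormedAlgebra ℝ (Matrix (Fin m) (Fin m) ℂ) := Matrix.linftyOpNormedAlgebra
  letI : NormedAlgebra ℚ (Matrix (Fin m) (Fin m) ℂ) := .restrictScalars ℚ ℝ _
  haveI : CompleteSpace (Matrix (Fin m) (Fin m) ℂ) := FiniteDimensional.complete ℝ _
  set C : Matrix (Fin m) (Fin m) ℂ := α * αᴴ - αᴴ * α with hC
  set B : Matrix (Fin m) (Fin m) ℂ := C * α - α * C with hB
  -- units from exp
  have hcomm : ∀ t : ℝ, Commute (t • C) (t • (-C)) := by
    intro t; rw [smul_neg]; exact (Commute.refl _).neg_right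
  have hexp_mul : ∀ t : ℝ, exp (t • C) * exp (t • (-C)) = 1 := by
    intro t
    have h0 := NormedSpace.exp_add_of_commute (hcomm t)
    rw [← smul_add, add_neg_cancel, smul_zero, exp_zero] at h0
    exact h0.symm
  have hexp_mul' : ∀ t : ℝ, exp (t • (-C)) * exp (t • C) = 1 := by
    intro t
    have h0 := NormedSpace.exp_add_of_commute (hcomm t).symm
    rw [← smul_add, neg_add_cancel, smul_zero, exp_zero] at h0
    exact h0.symm
  set M : ℝ → Matrix (Fin m) (Fin m) ℂ := fun t => exp (t • C) * α * exp (t • (-C)) with hM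
  set φ : ℝ → ℝ := fun t => F (M t) with hφ
  have hM0 : M 0 = α := by
    simp only [hM, zero_smul, exp_zero, one_mul, mul_one]
  have hmin' : ∀ t : ℝ, φ 0 ≤ φ t := by
    intro t
    have := hmin (Units.mk (exp (t • C)) (exp (t • (-C))) (hexp_mul t) (hexp_mul' t))
    simp only [hφ, hM0]
    exact this
  -- derivative of M at 0
  have hDM : HasDerivAt M B 0 := by
    have h1 : HasDerivAt (fun t : ℝ => exp (t • C)) (exp ((0:ℝ) • C) * C) 0 :=
      hasDerivAt_exp_smul_const C 0
    have h2 : HasDerivAt (fun t : ℝ => exp (t • (-C))) (exp ((0:ℝ) • (-C)) * (-C)) 0 :=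
      hasDerivAt_exp_smul_const (-C) 0
    have h3 := (h1.mul_const α).mul h2
    simp only [zero_smul, exp_zero, one_mul, mul_one, mul_neg, ← sub_eq_add_neg] at h3
    exact h3
  -- entrywise derivatives
  have hDentry : ∀ i j, HasDerivAt (fun t => M t i j) (B i j) 0 := by
    intro i j
    let L : Matrix (Fin m) (Fin m) ℂ →ₗ[ℝ] ℂ :=
      { toFun := fun A => A i j
        map_add' := fun A A' => rfl
        map_smul' := fun r A => rfl }
    have hL : Continuous L := L.continuous_of_finiteDimensional
    exact (ContinuousLinearMap.hasFDerivAt ⟨L, hL⟩).comp_hasDerivAt 0 hDM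
  have habs : ∀ i j, HasDerivAt (fun t => ‖M t i j‖ ^ 2)
      (2 * ((α i j).re * (B i j).re + (α i j).im * (B i j).im)) 0 := by
    intro i j
    have hre : HasDerivAt (fun t => (M t i j).re) ((B i j).re) 0 :=
      Complex.reCLM.hasFDerivAt.comp_hasDerivAt 0 (hDentry i j)
    have him : HasDerivAt (fun t => (M t i j).im) ((B i j).im) 0 :=
      Complex.imCLM.hasFDerivAt.comp_hasDerivAt 0 (hDentry i j)
    have h := (hre.fun_pow 2).fun_add (him.fun_pow 2)
    have heq : (fun t => (M t i j).re ^ 2 + (M t i j).im ^ 2)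
        = fun t => ‖M t i j‖ ^ 2 := by
      funext t
      rw [Complex.sq_norm, Complex.normSq_apply]
      ring
    rw [heq] at h
    refine h.congr_deriv ?_
    rw [hM0]
    push_cast
    ring
  have hφD : HasDerivAt φ
      (∑ i, ∑ j, 2 * ((α i j).re * (B i j).re + (α i j).im * (B i j).im)) 0 := by
    have h : HasDerivAt (fun t => ∑ i, ∑ j, ‖M t i j‖ ^ 2)
        (∑ i, ∑ j, 2 * ((α i j).re * (B i j).re + (α i j).im * (B i j).im)) 0 := by
      refine HasDerivAt.fun_sum fun i _ => ?_
      exact HasDerivAt.fun_sum fun j _ => habs i j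
    exact h
  have hd0 : (∑ i, ∑ j, 2 * ((α i j).re * (B i j).re + (α i j).im * (B i j).im)) = 0 := by
    have hloc : IsLocalMin φ 0 := Filter.Eventually.of_forall hmin'
    exact hloc.hasDerivAt_eq_zero hφD
  -- identify the derivative with 2 * F C
  have hCH : Cᴴ = C := by
    rw [hC]
    simp only [conjTranspose_sub, conjTranspose_mul, conjTranspose_conjTranspose]
  have htrC : trace (B * αᴴ) = ((F C : ℝ) : ℂ) := by
    rw [← trace_mul_conjTranspose C]
    calc trace (B * αᴴ) = trace (C * (α * αᴴ)) - trace (α * (C * αᴴ)) := by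
          simp only [hB, sub_mul, trace_sub, mul_assoc]
      _ = trace (C * (α * αᴴ)) - trace (C * (αᴴ * α)) := by
          rw [trace_mul_comm α (C * αᴴ), mul_assoc]
      _ = trace (C * C) := by rw [← trace_sub, ← mul_sub, ← hC]
      _ = trace (C * Cᴴ) := by rw [hCH]
  have hsum : (∑ i, ∑ j, 2 * ((α i j).re * (B i j).re + (α i j).im * (B i j).im))
      = 2 * F C := by
    have hterm : ∀ i j, (α i j).re * (B i j).re + (α i j).im * (B i j).im
        = (B i j * star (α i j)).re := by
      intro i j
      simp only [Complex.star_def, Complex.mul_re, Complex.conj_re, Complex.conj_im]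
      ring
    have htr : trace (B * αᴴ) = ∑ i, ∑ j, B i j * star (α i j) := by
      simp only [trace, diag, mul_apply, conjTranspose_apply]
    calc ∑ i, ∑ j, 2 * ((α i j).re * (B i j).re + (α i j).im * (B i j).im)
        = 2 * ∑ i, ∑ j, (B i j * star (α i j)).re := by
          rw [Finset.mul_sum]
          refine Finset.sum_congr rfl fun i _ => ?_
          rw [Finset.mul_sum]
          exact Finset.sum_congr rfl fun j _ => by rw [hterm]
      _ = 2 * (∑ i, ∑ j, B i j * star (α i j)).re := by
          rw [Complex.re_sum]
          congr 1
          exact Finset.sum_congr rfl fun i _ => (Complex.re_sum _ _).symm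
      _ = 2 * ((trace (B * αᴴ)).re) := by rw [htr]
      _ = 2 * F C := by rw [htrC, Complex.ofReal_re]
  have hFC : F C = 0 := by
    rw [hsum] at hd0
    linarith
  have hC0 : C = 0 := F_eq_zero_iff.mp hFC
  rw [hC] at hC0
  exact sub_eq_zero.mp hC0

/-- Lemma 5.1 in the adjoint model: a matrix `α` has minimal Frobenius norm in
its conjugation orbit `{g α g⁻¹ : g ∈ GL_m(ℂ)}` if and only if it is normal,
i.e. `α αᴴ = αᴴ α`. -/
theorem stmt_5 (m : ℕ) (α : Matrix (Fin m) (Fin m) ℂ) :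
    (∀ g : (Matrix (Fin m) (Fin m) ℂ)ˣ,
        frobNorm α ≤
          frobNorm ((g : Matrix (Fin m) (Fin m) ℂ) * α *
            (↑g⁻¹ : Matrix (Fin m) (Fin m) ℂ))) ↔
      α * αᴴ = αᴴ * α := by
  have hfrob : ∀ A : Matrix (Fin m) (Fin m) ℂ, frobNorm A = Real.sqrt (F A) := fun _ => rfl
  constructor
  · intro hmin
    apply normal_of_min
    intro g
    have h := hmin g
    rw [hfrob, hfrob] at h
    exact (Real.sqrt_le_sqrt_iff (F_nonneg _)).mp h
  · intro hα g
    rw [hfrob, hfrob]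
    exact Real.sqrt_le_sqrt (F_le_conj_of_normal α hα g)
end

section
/- For every α ∈ M_m(ℂ) and every Hermitian matrix δ ∈ M_m(ℂ) (δᴴ = δ), the function f(t) = ‖exp(tδ) · α · exp(−tδ)‖² (Frobenius norm, matrix exponential) is differentiable at t = 0 with f′(0) = 2 · Re tr(δ · (ααᴴ − αᴴα)). Moreover, f′(0) = 0 for every Hermitian δ if and only if α is normal. -/
open Matrix NormedSpace

/-- The matrix exponential `exp A = ∑ₖ Aᵏ / k!`. -/
noncomputable def mexp {m : ℕ} (A : Matrix (Fin m) (Fin m) ℂ) :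
    Matrix (Fin m) (Fin m) ℂ :=
  ∑' k : ℕ, ((k.factorial : ℂ)⁻¹) • (A ^ k)

attribute [local instance] Matrix.linftyOpNormedAddCommGroup Matrix.linftyOpNormedSpace
  Matrix.linftyOpNormedRing Matrix.linftyOpNormedAlgebra

lemma mexp_eq {m : ℕ} (A : Matrix (Fin m) (Fin m) ℂ) : mexp A = NormedSpace.exp A := by
  rw [exp_eq_tsum ℂ]; rfl

/-- Entry map as a continuous linear map over ℝ. -/
noncomputable def entryCLM {m : ℕ} (i j : Fin m) : Matrix (Fin m) (Fin m) ℂ →L[ℝ] ℂ :=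
  LinearMap.toContinuousLinearMap
    { toFun := fun A => A i j
      map_add' := fun _ _ => rfl
      map_smul' := fun _ _ => rfl }

lemma key {m : ℕ} (α δ : Matrix (Fin m) (Fin m) ℂ) :
    HasDerivAt
      (fun t : ℝ => frobNorm (mexp (t • δ) * α * mexp (-(t • δ))) ^ 2)
      (2 * ((δ * (α * αᴴ - αᴴ * α)).trace).re) 0 := by
  set b : Matrix (Fin m) (Fin m) ℂ := δ * α - α * δ with hb
  have h1 : HasDerivAt (fun t : ℝ => NormedSpace.exp (t • δ)) δ 0 := by
    have := hasDerivAt_exp_smul_const (𝕂 := ℝ) δ (0 : ℝ)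
    simp at this
    exact this
  have h2 : HasDerivAt (fun t : ℝ => NormedSpace.exp (t • (-δ))) (-δ) 0 := by
    have := hasDerivAt_exp_smul_const (𝕂 := ℝ) (-δ) (0 : ℝ)
    simp at this ⊢
    exact this
  have hg : HasDerivAt (fun t : ℝ => NormedSpace.exp (t • δ) * α * NormedSpace.exp (t • (-δ))) b 0 := by
    have := (h1.mul_const α).mul h2
    simp [hb, mul_comm, sub_eq_add_neg] at this ⊢
    exact this
  set g : ℝ → Matrix (Fin m) (Fin m) ℂ := fun t => NormedSpace.exp (t • δ) * α * NormedSpace.exp (t • (-δ))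
    with hgdef
  have hg0 : g 0 = α := by simp [hgdef, exp_zero]
  have hij : ∀ i j : Fin m, HasDerivAt (fun t : ℝ => g t i j) (b i j) 0 := fun i j =>
    (entryCLM i j).hasFDerivAt.comp_hasDerivAt 0 hg
  have hentry : ∀ i j : Fin m,
      HasDerivAt (fun t : ℝ => ‖g t i j‖ ^ 2)
        (2 * ((b i j) * (starRingEnd ℂ) (α i j)).re) 0 := by
    intro i j
    have hre : HasDerivAt (fun t : ℝ => (g t i j).re) ((b i j).re) 0 :=
      Complex.reCLM.hasFDerivAt.comp_hasDerivAt 0 (hij i j)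
    have him : HasDerivAt (fun t : ℝ => (g t i j).im) ((b i j).im) 0 :=
      Complex.imCLM.hasFDerivAt.comp_hasDerivAt 0 (hij i j)
    have h := (hre.pow 2).add (him.pow 2)
    have heq : (fun t : ℝ => ‖g t i j‖ ^ 2)
        = fun t : ℝ => (g t i j).re ^ 2 + (g t i j).im ^ 2 := by
      funext t
      rw [Complex.sq_norm, Complex.normSq_apply]; ring
    rw [heq]
    convert h using 1
    · rfl
    · rfl
    · rfl
    rw [hg0]
    simp [Complex.mul_re, Complex.conj_re, Complex.conj_im]
    ring
  have hsum : HasDerivAt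
      (fun t : ℝ => ∑ i, ∑ j, ‖g t i j‖ ^ 2)
      (∑ i, ∑ j, 2 * ((b i j) * (starRingEnd ℂ) (α i j)).re) 0 := by
    apply HasDerivAt.fun_sum
    intro i _
    exact HasDerivAt.fun_sum fun j _ => hentry i j
  have hfun : (fun t : ℝ => frobNorm (mexp (t • δ) * α * mexp (-(t • δ))) ^ 2)
      = fun t : ℝ => ∑ i, ∑ j, ‖g t i j‖ ^ 2 := by
    funext t
    have : mexp (t • δ) * α * mexp (-(t • δ)) = g t := by
      rw [hgdef, mexp_eq, mexp_eq, ← smul_neg]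
    rw [this, frobNorm, Real.sq_sqrt]
    positivity
  have hval : (∑ i, ∑ j, 2 * ((b i j) * (starRingEnd ℂ) (α i j)).re)
      = 2 * ((δ * (α * αᴴ - αᴴ * α)).trace).re := by
    have h1 : (∑ i, ∑ j, 2 * ((b i j) * (starRingEnd ℂ) (α i j)).re)
        = 2 * ((b * αᴴ).trace).re := by
      have ht : (b * αᴴ).trace = ∑ i, ∑ j, b i j * (starRingEnd ℂ) (α i j) := by
        simp [Matrix.trace, Matrix.diag, Matrix.mul_apply, Matrix.conjTranspose_apply]
      rw [ht, Complex.re_sum, Finset.mul_sum]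
      refine Finset.sum_congr rfl fun i _ => ?_
      rw [Complex.re_sum, Finset.mul_sum]
    rw [h1]
    congr 2
    rw [hb, Matrix.sub_mul, Matrix.mul_sub, Matrix.trace_sub, Matrix.trace_sub,
      mul_assoc, mul_assoc]
    congr 1
    rw [← mul_assoc, ← mul_assoc, Matrix.trace_mul_cycle δ αᴴ α]
  rw [hfun, ← hval]
  exact hsum

/-- The first-variation computation underlying Lemma 5.1 and Corollary 5.3:
for every Hermitian `δ`, the function `f(t) = ‖exp(tδ) α exp(−tδ)‖²`
(Frobenius norm) is differentiable at `t = 0` with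
`f'(0) = 2 Re tr(δ (α αᴴ - αᴴ α))`; moreover `f'(0) = 0` for every Hermitian
`δ` if and only if `α` is normal. -/
theorem stmt_7 (m : ℕ) (α : Matrix (Fin m) (Fin m) ℂ) :
    (∀ δ : Matrix (Fin m) (Fin m) ℂ, δᴴ = δ →
      HasDerivAt
        (fun t : ℝ => frobNorm (mexp (t • δ) * α * mexp (-(t • δ))) ^ 2)
        (2 * ((δ * (α * αᴴ - αᴴ * α)).trace).re) 0) ∧
    ((∀ δ : Matrix (Fin m) (Fin m) ℂ, δᴴ = δ →
        deriv (fun t : ℝ => frobNorm (mexp (t • δ) * α * mexp (-(t • δ))) ^ 2) 0 = 0) ↔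
      α * αᴴ = αᴴ * α) := by
  refine ⟨fun δ _ => key α δ, ?_, ?_⟩
  · intro h
    set M : Matrix (Fin m) (Fin m) ℂ := α * αᴴ - αᴴ * α with hM
    have hMh : Mᴴ = M := by
      rw [hM, conjTranspose_sub, conjTranspose_mul, conjTranspose_mul,
        conjTranspose_conjTranspose]
    have h0 := h M hMh
    rw [(key α M).deriv] at h0
    have htr : ((M * M).trace).re = ∑ i, ∑ j, Complex.normSq (M j i) := by
      rw [Matrix.trace, Complex.re_sum]
      congr 1
      funext i
      rw [Matrix.diag, Matrix.mul_apply, Complex.re_sum]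
      congr 1
      funext j
      have : M i j = (starRingEnd ℂ) (M j i) := by
        conv_lhs => rw [← hMh]
        rfl
      rw [this, mul_comm, Complex.mul_conj]
      simp
    have hre : ((M * M).trace).re = 0 := by linarith [h0]
    rw [htr] at hre
    have hz : ∀ i ∈ Finset.univ, ∀ j ∈ Finset.univ, Complex.normSq (M (j : Fin m) i) = 0 := by
      have h1 := (Finset.sum_eq_zero_iff_of_nonneg
        (fun i _ => Finset.sum_nonneg fun j _ => Complex.normSq_nonneg _)).1 hre
      intro i hi j hj
      exact (Finset.sum_eq_zero_iff_of_nonneg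
        (fun j _ => Complex.normSq_nonneg _)).1 (h1 i hi) j hj
    have hM0 : M = 0 := by
      ext i j
      simpa using Complex.normSq_eq_zero.1 (hz j (Finset.mem_univ _) i (Finset.mem_univ _))
    rw [← sub_eq_zero]
    exact hM0
  · intro h δ hδ
    rw [(key α δ).deriv, h, sub_self, mul_zero]
    simp
end

section
/- Let ι be a finite type, w : ι → ℤ and v : ι → ℂ, and suppose there exists i ∈ ι with v(i) ≠ 0 and w(i) ≠ 0. Then the orbit { (t^{w(i)} · v(i))_{i ∈ ι} : t ∈ ℂ, t ≠ 0 } is a closed subset of the product space ι → ℂ if and only if there exist indices i, j with v(i) ≠ 0, v(j) ≠ 0, w(i) > 0 and w(j) < 0. -/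
/-- Auxiliary: if all non-zero components have non-negative weights and some
non-zero component has strictly positive weight, then the orbit is not closed
(the limit as `t → 0` is outside the orbit). -/
lemma stmt_11_aux (ι : Type) [Fintype ι] (w : ι → ℤ) (v : ι → ℂ)
    (hnn : ∀ i, v i ≠ 0 → 0 ≤ w i) (i₀ : ι) (hv₀ : v i₀ ≠ 0) (hw₀ : 0 < w i₀) :
    ¬ IsClosed {x : ι → ℂ | ∃ t : ℂ, t ≠ 0 ∧ x = fun i => t ^ (w i) * v i} := by
  intro hcl
  set S := {x : ι → ℂ | ∃ t : ℂ, t ≠ 0 ∧ x = fun i => t ^ (w i) * v i} with hS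
  set x₀ : ι → ℂ := fun i => if w i = 0 then v i else 0 with hx₀
  set t : ℕ → ℂ := fun n => ((1 / (n + 1 : ℝ) : ℝ) : ℂ) with ht
  have htne : ∀ n, t n ≠ 0 := by
    intro n
    simp only [ht]
    norm_cast
    positivity
  have ht0 : Filter.Tendsto t Filter.atTop (nhds 0) := by
    have h := (Complex.continuous_ofReal.tendsto (0 : ℝ)).comp
      tendsto_one_div_add_atTop_nhds_zero_nat
    rw [Complex.ofReal_zero] at h
    exact h
  have hmem : x₀ ∈ closure S := by
    apply mem_closure_of_tendsto (f := fun n => fun i => t n ^ (w i) * v i)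
      (b := Filter.atTop (α := ℕ))
    · rw [tendsto_pi_nhds]
      intro i
      by_cases hvi : v i = 0
      · have : x₀ i = 0 := by simp [hx₀, hvi]
        simpa [hvi, this] using tendsto_const_nhds
      · rcases eq_or_lt_of_le (hnn i hvi) with hwi | hwi
        · have : x₀ i = v i := by simp [hx₀, ← hwi]
          simpa [← hwi, this] using tendsto_const_nhds
        · have hxi : x₀ i = 0 := by simp [hx₀, hwi.ne']
          rw [hxi]
          have hcast : ∀ n, t n ^ (w i) = t n ^ ((w i).toNat) := by
            intro n
            rw [← zpow_natCast]
            congr 1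
            exact (Int.toNat_of_nonneg hwi.le).symm
          have hpow : Filter.Tendsto (fun n => t n ^ ((w i).toNat)) Filter.atTop
              (nhds 0) := by
            have := ht0.pow ((w i).toNat)
            rwa [zero_pow (by omega : (w i).toNat ≠ 0)] at this
          have := hpow.mul_const (v i)
          rw [zero_mul] at this
          exact this.congr (fun n => by rw [hcast n])
    · exact Filter.Eventually.of_forall (fun n => ⟨t n, htne n, rfl⟩)
  have hx₀S : x₀ ∈ S := hcl.closure_subset hmem
  obtain ⟨s, hs, hxs⟩ := hx₀S
  have h1 : x₀ i₀ = 0 := by simp [hx₀, hw₀.ne']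
  have h2 : x₀ i₀ = s ^ (w i₀) * v i₀ := by rw [hxs]
  exact (mul_ne_zero (zpow_ne_zero _ hs) hv₀) (h2.symm.trans h1)

/-- Hilbert–Mumford criterion for a one-parameter subgroup acting with integer
weights `w` on `ι → ℂ`: if some non-zero component of `v` has non-zero weight,
then the orbit `{(t^{w i} * v i)ᵢ : t ∈ ℂ*}` is closed if and only if there
are non-zero components of `v` whose weights differ in sign. -/
theorem stmt_11 (ι : Type) [Fintype ι] (w : ι → ℤ) (v : ι → ℂ)
    (hv : ∃ i, v i ≠ 0 ∧ w i ≠ 0) :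
    IsClosed {x : ι → ℂ | ∃ t : ℂ, t ≠ 0 ∧ x = fun i => t ^ (w i) * v i} ↔
      ∃ i j, v i ≠ 0 ∧ v j ≠ 0 ∧ 0 < w i ∧ w j < 0 := by
  constructor
  · -- closed → weights of opposite signs
    intro hcl
    by_contra hcon
    push_neg at hcon
    obtain ⟨i₀, hvi₀, hwi₀⟩ := hv
    rcases lt_or_gt_of_ne hwi₀ with hneg | hpos
    · -- all weights of nonzero components are ≤ 0; apply aux to -w
      have hnn : ∀ i, v i ≠ 0 → 0 ≤ -w i := by
        intro i hvi
        by_contra hlt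
        push_neg at hlt
        have h0 : 0 < w i := by omega
        have := hcon i i₀ hvi hvi₀ h0
        omega
      have heq : {x : ι → ℂ | ∃ t : ℂ, t ≠ 0 ∧ x = fun i => t ^ (w i) * v i}
          = {x : ι → ℂ | ∃ t : ℂ, t ≠ 0 ∧ x = fun i => t ^ (-w i) * v i} := by
        ext x
        constructor
        · rintro ⟨t, htne, rfl⟩
          exact ⟨t⁻¹, inv_ne_zero htne, by
            funext i; congr 1; rw [inv_zpow, ← zpow_neg, neg_neg]⟩
        · rintro ⟨t, htne, rfl⟩
          exact ⟨t⁻¹, inv_ne_zero htne, by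
            funext i; congr 1; rw [inv_zpow, ← zpow_neg]⟩
      rw [heq] at hcl
      exact stmt_11_aux ι (fun i => -w i) v hnn i₀ hvi₀ (by show (0:ℤ) < -w i₀; omega) hcl
    · have hnn : ∀ i, v i ≠ 0 → 0 ≤ w i := fun i hvi => hcon i₀ i hvi₀ hvi hpos
      exact stmt_11_aux ι w v hnn i₀ hvi₀ hpos hcl
  · -- weights of opposite sign → closed
    rintro ⟨i₀, j₀, hvi, hvj, hwi, hwj⟩
    apply IsSeqClosed.isClosed
    intro u x hu hux
    choose t htne hut using hu
    have hcomp : ∀ i, Filter.Tendsto (fun n => t n ^ (w i) * v i) Filter.atTop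
        (nhds (x i)) := by
      intro i
      have := tendsto_pi_nhds.mp hux i
      exact this.congr (fun n => by rw [hut n])
    set a := x i₀ / v i₀ with ha
    set b := x j₀ / v j₀ with hb
    have h1 : Filter.Tendsto (fun n => t n ^ (w i₀)) Filter.atTop (nhds a) := by
      have := (hcomp i₀).div_const (v i₀)
      exact this.congr (fun n => by field_simp)
    have h2 : Filter.Tendsto (fun n => t n ^ (w j₀)) Filter.atTop (nhds b) := by
      have := (hcomp j₀).div_const (v j₀)
      exact this.congr (fun n => by field_simp)
    set p := (w i₀).toNat with hp
    set q := (-w j₀).toNat with hq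
    have hpz : (p : ℤ) = w i₀ := Int.toNat_of_nonneg hwi.le
    have hqz : (q : ℤ) = -w j₀ := Int.toNat_of_nonneg (by omega)
    have hpne : p ≠ 0 := by omega
    have hqne : q ≠ 0 := by omega
    -- the key identity forcing `a ≠ 0`
    have hkey : ∀ n, (t n ^ (w i₀)) ^ q * (t n ^ (w j₀)) ^ p = 1 := by
      intro n
      rw [← zpow_natCast (t n ^ (w i₀)), ← zpow_natCast (t n ^ (w j₀)),
        ← zpow_mul, ← zpow_mul, ← zpow_add₀ (htne n)]
      have : w i₀ * (q : ℤ) + w j₀ * (p : ℤ) = 0 := by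
        rw [hpz, hqz]; ring
      rw [this, zpow_zero]
    have hab : a ^ q * b ^ p = 1 := by
      have hl : Filter.Tendsto (fun n => (t n ^ (w i₀)) ^ q * (t n ^ (w j₀)) ^ p)
          Filter.atTop (nhds (a ^ q * b ^ p)) := (h1.pow q).mul (h2.pow p)
      have hr : Filter.Tendsto (fun n => (t n ^ (w i₀)) ^ q * (t n ^ (w j₀)) ^ p)
          Filter.atTop (nhds 1) := by
        simpa [hkey] using (tendsto_const_nhds : Filter.Tendsto (fun _ : ℕ => (1:ℂ))
          Filter.atTop (nhds 1))
      exact tendsto_nhds_unique hl hr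
    have hane : a ≠ 0 := by
      intro h0
      rw [h0, zero_pow hqne, zero_mul] at hab
      exact zero_ne_one hab
    -- the sequence `t` is bounded
    obtain ⟨C, hC⟩ := (h1.norm).bddAbove_range
    have hbound : ∀ n, ‖t n‖ ≤ max 1 C := by
      intro n
      rcases le_or_gt ‖t n‖ 1 with h | h
      · exact le_trans h (le_max_left _ _)
      · refine le_trans ?_ (le_max_right _ _)
        have h1n : ‖t n‖ ≤ ‖t n‖ ^ p := le_self_pow₀ h.le hpne
        have : ‖t n ^ (w i₀)‖ = ‖t n‖ ^ p := by
          rw [← hpz, zpow_natCast, norm_pow]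
        refine le_trans h1n ?_
        rw [← this]
        exact hC ⟨n, rfl⟩
    -- extract a convergent subsequence
    have hsub : ∀ n, t n ∈ Metric.closedBall (0 : ℂ) (max 1 C) := by
      intro n
      simpa using hbound n
    obtain ⟨T, -, φ, hφ, hTt⟩ :=
      (isCompact_closedBall (0 : ℂ) (max 1 C)).tendsto_subseq hsub
    have hTp : T ^ p = a := by
      have hl : Filter.Tendsto (fun n => t (φ n) ^ p) Filter.atTop (nhds (T ^ p)) :=
        hTt.pow p
      have hr : Filter.Tendsto (fun n => t (φ n) ^ p) Filter.atTop (nhds a) := by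
        have := h1.comp hφ.tendsto_atTop
        exact this.congr (fun n => by rw [Function.comp_apply, ← hpz, zpow_natCast])
      exact tendsto_nhds_unique hl hr
    have hTne : T ≠ 0 := by
      intro h0
      rw [h0, zero_pow hpne] at hTp
      exact hane hTp.symm
    refine ⟨T, hTne, ?_⟩
    funext i
    have hl : Filter.Tendsto (fun n => t (φ n) ^ (w i) * v i) Filter.atTop
        (nhds (T ^ (w i) * v i)) := by
      have hz : Filter.Tendsto (fun n => t (φ n) ^ (w i)) Filter.atTop
          (nhds (T ^ (w i))) :=
        ((continuousAt_zpow₀ T (w i) (Or.inl hTne)).tendsto).comp hTt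
      exact hz.mul_const (v i)
    have hr : Filter.Tendsto (fun n => t (φ n) ^ (w i) * v i) Filter.atTop
        (nhds (x i)) := (hcomp i).comp hφ.tendsto_atTop
    exact tendsto_nhds_unique hr hl
end

section
/- Let ι be a finite type, w : ι → ℤ and v : ι → ℂ. The map φ : ℂˣ → (ι → ℂ) defined by φ(t) = (t^{w(i)} · v(i))_{i ∈ ι} is proper (i.e. φ tends to the cocompact filter of ι → ℂ along the cocompact filter of ℂˣ; equivalently, preimages of compact sets are compact) if and only if there exist indices i, j with v(i) ≠ 0, v(j) ≠ 0, w(i) > 0 and w(j) < 0. -/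
open Filter Metric

private lemma aux_ne (n : ℕ) : ((n : ℂ) + 1) ≠ 0 := by
  exact_mod_cast Nat.succ_ne_zero n

private noncomputable def useq (n : ℕ) : ℂˣ := Units.mk0 ((n : ℂ) + 1) (aux_ne n)

private lemma useq_val (n : ℕ) : (useq n : ℂ) = ((n + 1 : ℕ) : ℂ) := by
  simp [useq]

private lemma useq_norm (n : ℕ) : ‖(useq n : ℂ)‖ = (n : ℝ) + 1 := by
  rw [useq_val]
  rw [Complex.norm_natCast]
  push_cast
  ring

private lemma units_norm_bound {K : Set ℂˣ} (hK : IsCompact K) :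
    ∃ R : ℝ, ∀ t ∈ K, ‖(t : ℂ)‖ ≤ R := by
  have h : IsCompact (Units.val '' K) := hK.image Units.continuous_val
  obtain ⟨R, hR⟩ := h.isBounded.subset_closedBall 0
  exact ⟨R, fun t ht => by
    simpa [mem_closedBall_zero_iff] using hR ⟨t, ht, rfl⟩⟩

private lemma isCompact_annulus {ε R : ℝ} (hε : 0 < ε) :
    IsCompact {t : ℂˣ | ε ≤ ‖(t : ℂ)‖ ∧ ‖(t : ℂ)‖ ≤ R} := by
  rw [Units.isEmbedding_val₀.isCompact_iff]
  have himg : Units.val '' {t : ℂˣ | ε ≤ ‖(t : ℂ)‖ ∧ ‖(t : ℂ)‖ ≤ R}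
      = {z : ℂ | ε ≤ ‖z‖ ∧ ‖z‖ ≤ R} := by
    ext z
    constructor
    · rintro ⟨t, ht, rfl⟩; exact ht
    · rintro ⟨h1, h2⟩
      have hz : z ≠ 0 := by
        intro h; rw [h] at h1; simp at h1; linarith
      exact ⟨Units.mk0 z hz, ⟨h1, h2⟩, rfl⟩
  rw [himg]
  apply (isCompact_closedBall (0 : ℂ) R).of_isClosed_subset
  · exact (isClosed_le continuous_const continuous_norm).inter
      (isClosed_le continuous_norm continuous_const)
  · intro z hz
    simpa [mem_closedBall_zero_iff] using hz.2

private lemma tendsto_useq : Tendsto useq atTop (cocompact ℂˣ) := by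
  rw [hasBasis_cocompact.tendsto_right_iff]
  intro K hK
  obtain ⟨R, hR⟩ := units_norm_bound hK
  filter_upwards [eventually_gt_atTop ⌈R⌉₊] with n hn hmem
  have h1 : ‖(useq n : ℂ)‖ ≤ R := hR _ hmem
  have h2 : (R : ℝ) ≤ n := le_trans (Nat.le_ceil R) (by exact_mod_cast hn.le)
  rw [useq_norm] at h1
  linarith

private lemma tendsto_inv_cocompact :
    Tendsto (Inv.inv : ℂˣ → ℂˣ) (cocompact ℂˣ) (cocompact ℂˣ) := by
  rw [hasBasis_cocompact.tendsto_right_iff]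
  intro K hK
  have hK' : IsCompact (Inv.inv '' K : Set ℂˣ) := hK.image continuous_inv
  filter_upwards [hK'.compl_mem_cocompact] with t ht hmem
  exact ht ⟨t⁻¹, hmem, inv_inv t⟩

/-- Properness criterion for a one-parameter subgroup acting with integer
weights `w` on `ι → ℂ`: the map `ℂˣ → (ι → ℂ)`, `t ↦ (t^{w i} * v i)ᵢ`, is
proper (tends to the cocompact filter along the cocompact filter) if and only
if there are non-zero components of `v` whose weights differ in sign. -/
theorem stmt_12 (ι : Type) [Fintype ι] (w : ι → ℤ) (v : ι → ℂ) :
    Filter.Tendsto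
        (fun t : ℂˣ => (fun i => (t : ℂ) ^ (w i) * v i : ι → ℂ))
        (Filter.cocompact ℂˣ) (Filter.cocompact (ι → ℂ)) ↔
      ∃ i j, v i ≠ 0 ∧ v j ≠ 0 ∧ 0 < w i ∧ w j < 0 := by
  set φ : ℂˣ → (ι → ℂ) := fun t => (fun i => (t : ℂ) ^ (w i) * v i) with hφdef
  constructor
  · intro hφ
    by_contra hcon
    push_neg at hcon
    set C : ℝ := ∑ k, ‖v k‖ with hC
    have hC0 : 0 ≤ C := Finset.sum_nonneg fun k _ => norm_nonneg _
    by_cases hpos : ∃ i, v i ≠ 0 ∧ 0 < w i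
    · -- all nonzero weights are ≥ 0; use t → 0
      obtain ⟨i, hvi, hwi⟩ := hpos
      have hnn : ∀ k, v k ≠ 0 → 0 ≤ w k := fun k hk => hcon i k hvi hk hwi
      have hut : Tendsto (fun n => (useq n)⁻¹) atTop (cocompact ℂˣ) :=
        tendsto_inv_cocompact.comp tendsto_useq
      have hbound : ∀ n, φ ((useq n)⁻¹) ∈ closedBall (0 : ι → ℂ) C := by
        intro n
        rw [mem_closedBall_zero_iff, pi_norm_le_iff_of_nonneg hC0]
        intro k
        by_cases hk : v k = 0
        · simp [hφdef, hk, hC0]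
        · have hnorm : ‖(((useq n)⁻¹ : ℂˣ) : ℂ)‖ ≤ 1 := by
            rw [Units.val_inv_eq_inv_val, norm_inv, useq_norm, inv_le_one_iff₀]
            right; linarith [Nat.cast_nonneg (α := ℝ) n]
          have h0 : (0 : ℝ) < ‖(((useq n)⁻¹ : ℂˣ) : ℂ)‖ :=
            norm_pos_iff.mpr (Units.ne_zero _)
          have hpow : ‖(((useq n)⁻¹ : ℂˣ) : ℂ)‖ ^ (w k) ≤ 1 := by
            rw [← Int.toNat_of_nonneg (hnn k hk), zpow_natCast]
            exact pow_le_one₀ h0.le hnorm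
          calc ‖φ ((useq n)⁻¹) k‖ = ‖(((useq n)⁻¹ : ℂˣ) : ℂ)‖ ^ (w k) * ‖v k‖ := by
                simp [hφdef, norm_mul, norm_zpow]
            _ ≤ 1 * ‖v k‖ := mul_le_mul_of_nonneg_right hpow (norm_nonneg _)
            _ ≤ C := by
                rw [one_mul]
                exact Finset.single_le_sum (fun k _ => norm_nonneg (v k)) (Finset.mem_univ k)
      have := (hasBasis_cocompact.tendsto_right_iff.mp (hφ.comp hut))
        (closedBall 0 C) (isCompact_closedBall 0 C)
      obtain ⟨n, hn⟩ := this.exists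
      exact hn (hbound n)
    · -- all nonzero weights are ≤ 0; use t → ∞
      push_neg at hpos
      have hbound : ∀ n, φ (useq n) ∈ closedBall (0 : ι → ℂ) C := by
        intro n
        rw [mem_closedBall_zero_iff, pi_norm_le_iff_of_nonneg hC0]
        intro k
        by_cases hk : v k = 0
        · simp [hφdef, hk, hC0]
        · have hnorm : 1 ≤ ‖(useq n : ℂ)‖ := by
            rw [useq_norm]; linarith [Nat.cast_nonneg (α := ℝ) n]
          have hpow : ‖(useq n : ℂ)‖ ^ (w k) ≤ 1 :=
            zpow_le_one_of_nonpos₀ hnorm (hpos k hk)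
          calc ‖φ (useq n) k‖ = ‖(useq n : ℂ)‖ ^ (w k) * ‖v k‖ := by
                simp [hφdef, norm_mul, norm_zpow]
            _ ≤ 1 * ‖v k‖ := mul_le_mul_of_nonneg_right hpow (norm_nonneg _)
            _ ≤ C := by
                rw [one_mul]
                exact Finset.single_le_sum (fun k _ => norm_nonneg (v k)) (Finset.mem_univ k)
      have := (hasBasis_cocompact.tendsto_right_iff.mp (hφ.comp tendsto_useq))
        (closedBall 0 C) (isCompact_closedBall 0 C)
      obtain ⟨n, hn⟩ := this.exists
      exact hn (hbound n)
  · rintro ⟨i, j, hvi, hvj, hwi, hwj⟩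
    rw [hasBasis_cocompact.tendsto_right_iff]
    intro K hK
    obtain ⟨M, hM⟩ := hK.isBounded.subset_closedBall 0
    have hM' : ∀ x ∈ K, ‖x‖ ≤ M := fun x hx => by
      simpa [mem_closedBall_zero_iff] using hM hx
    have hvi' : 0 < ‖v i‖ := norm_pos_iff.mpr hvi
    have hvj' : 0 < ‖v j‖ := norm_pos_iff.mpr hvj
    set R : ℝ := max 1 (M / ‖v i‖) with hR
    set ε : ℝ := min 1 (‖v j‖ / max M 1) with hε
    have hε0 : 0 < ε :=
      lt_min one_pos (div_pos hvj' (lt_max_of_lt_right one_pos))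
    have hann := isCompact_annulus (R := R) hε0
    rw [eventually_iff, mem_cocompact]
    refine ⟨_, hann, ?_⟩
    intro t ht
    simp only [Set.mem_compl_iff, Set.mem_setOf_eq, not_and_or, not_le] at ht
    simp only [Set.mem_setOf_eq, Set.mem_compl_iff]
    intro hmem
    have hcomp : ∀ k, ‖(t : ℂ)‖ ^ (w k) * ‖v k‖ ≤ M := by
      intro k
      calc ‖(t : ℂ)‖ ^ (w k) * ‖v k‖ = ‖φ t k‖ := by
            simp [hφdef, norm_mul, norm_zpow]
        _ ≤ ‖φ t‖ := norm_le_pi_norm (φ t) k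
        _ ≤ M := hM' _ hmem
    have ht0 : (0 : ℝ) < ‖(t : ℂ)‖ := norm_pos_iff.mpr (Units.ne_zero t)
    rcases ht with ht | ht
    · -- ‖t‖ < ε : contradiction via weight w j < 0
      have ht1 : ‖(t : ℂ)‖ ≤ 1 := (lt_of_lt_of_le ht (min_le_left _ _)).le
      have hinv : 1 ≤ ‖(t : ℂ)‖⁻¹ := (one_le_inv₀ ht0).mpr ht1
      have h1 : ‖(t : ℂ)‖⁻¹ ≤ ‖(t : ℂ)‖ ^ (w j) := by
        calc ‖(t : ℂ)‖⁻¹ = (‖(t : ℂ)‖⁻¹) ^ (1 : ℤ) := (zpow_one _).symm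
          _ ≤ (‖(t : ℂ)‖⁻¹) ^ (-w j) := zpow_le_zpow_right₀ hinv (by omega)
          _ = ‖(t : ℂ)‖ ^ (w j) := by
              rw [inv_zpow, ← zpow_neg, neg_neg]
      have h2 : ‖(t : ℂ)‖⁻¹ * ‖v j‖ ≤ M :=
        le_trans (mul_le_mul_of_nonneg_right h1 hvj'.le) (hcomp j)
      have hM0 : 0 < M :=
        lt_of_lt_of_le (mul_pos (inv_pos.mpr ht0) hvj') h2
      have h3 : ‖v j‖ ≤ M * ‖(t : ℂ)‖ := by
        have := mul_le_mul_of_nonneg_right h2 ht0.le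
        rw [mul_comm (‖(t : ℂ)‖⁻¹) (‖v j‖), mul_assoc, inv_mul_cancel₀ ht0.ne',
          mul_one] at this
        linarith
      have h4 : ‖v j‖ / max M 1 ≤ ‖(t : ℂ)‖ := by
        rw [div_le_iff₀ (lt_max_of_lt_left hM0)]
        calc ‖v j‖ ≤ M * ‖(t : ℂ)‖ := h3
          _ ≤ ‖(t : ℂ)‖ * max M 1 := by
              rw [mul_comm]
              exact mul_le_mul_of_nonneg_left (le_max_left _ _) ht0.le
      have : ε ≤ ‖(t : ℂ)‖ := le_trans (min_le_right _ _) h4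
      linarith
    · -- R < ‖t‖ : contradiction via weight w i > 0
      have ht1 : 1 < ‖(t : ℂ)‖ := lt_of_le_of_lt (le_max_left _ _) ht
      have h1 : ‖(t : ℂ)‖ ≤ ‖(t : ℂ)‖ ^ (w i) := by
        calc ‖(t : ℂ)‖ = ‖(t : ℂ)‖ ^ (1 : ℤ) := (zpow_one _).symm
          _ ≤ ‖(t : ℂ)‖ ^ (w i) := zpow_le_zpow_right₀ ht1.le hwi
      have h3 : ‖(t : ℂ)‖ ≤ M / ‖v i‖ := by
        rw [le_div_iff₀ hvi']
        exact le_trans (mul_le_mul_of_nonneg_right h1 hvi'.le) (hcomp i)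
      have : ‖(t : ℂ)‖ ≤ R := le_trans h3 (le_max_right _ _)
      linarith
end

section
/- Let ι be a finite nonempty type, w : ι → ℤ and v : ι → ℂ with v not identically zero. Equip ι → ℂ with the supremum norm. Then, as the real parameter t tends to 0 from the right, the quotient log‖(t^{w(i)} · v(i))_{i ∈ ι}‖ / log t converges to the minimum of w(i) over those i with v(i) ≠ 0. -/
open scoped Classical
open Filter Set

private lemma tendsto_finset_inf' {ι : Type} {l : Filter ℝ} (s : Finset ι) (hs : s.Nonempty)
    (f : ι → ℝ → ℝ) (a : ι → ℝ) (h : ∀ i ∈ s, Tendsto (f i) l (nhds (a i))) :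
    Tendsto (fun t => s.inf' hs (fun i => f i t)) l (nhds (s.inf' hs a)) := by
  induction hs using Finset.Nonempty.cons_induction with
  | singleton i =>
    have e1 : (fun t => ({i} : Finset ι).inf' (Finset.singleton_nonempty i) fun j => f j t)
        = f i := funext fun t => Finset.inf'_singleton _
    have e2 : ({i} : Finset ι).inf' (Finset.singleton_nonempty i) a = a i :=
      Finset.inf'_singleton _
    rw [e1, e2]
    exact h i (Finset.mem_singleton_self i)
  | cons i s hi hs ih =>
    have e1 : (fun t => (Finset.cons i s hi).inf' (Finset.cons_nonempty hi) fun j => f j t)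
        = fun t => min (f i t) (s.inf' hs fun j => f j t) :=
      funext fun t => by rw [Finset.inf'_cons (H := hs)]
    have e2 : (Finset.cons i s hi).inf' (Finset.cons_nonempty hi) a
        = min (a i) (s.inf' hs a) := by rw [Finset.inf'_cons (H := hs)]
    rw [e1, e2]
    exact Tendsto.min (h i (by simp)) (ih (fun j hj => h j (Finset.mem_cons_of_mem hj)))

/-- The numerical criterion of §5: with the sup norm on `ι → ℂ`, as `t → 0⁺`
the quotient `log‖(t^{w i} * v i)ᵢ‖ / log t` converges to the minimum of the
weights `w i` over the indices `i` with `v i ≠ 0`. -/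
theorem stmt_13 (ι : Type) [Fintype ι] [Nonempty ι] (w : ι → ℤ) (v : ι → ℂ)
    (hne : (Finset.univ.filter fun i => v i ≠ 0).Nonempty) :
    Filter.Tendsto
      (fun t : ℝ =>
        Real.log ‖(fun i => (t : ℂ) ^ (w i) * v i : ι → ℂ)‖ / Real.log t)
      (nhdsWithin 0 (Set.Ioi 0))
      (nhds ((((Finset.univ.filter fun i => v i ≠ 0).image w).min'
        (hne.image w) : ℤ) : ℝ)) := by
  set S := Finset.univ.filter fun i => v i ≠ 0 with hS
  have hv : ∀ i ∈ S, v i ≠ 0 := fun i hi => (Finset.mem_filter.mp hi).2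
  -- rewrite the limit value
  have hval : ((((S.image w).min' (hne.image w) : ℤ) : ℝ))
      = S.inf' hne (fun i => (w i : ℝ)) := by
    rw [Finset.min'_eq_inf', Finset.inf'_image]
    exact Finset.apply_inf'_eq_inf'_comp (f := id ∘ w) hne (fun z : ℤ => (z : ℝ))
      (fun x y => by simp [Monotone.map_min Int.cast_mono])
  rw [hval]
  -- the eventual form of the function
  have key : ∀ t ∈ Ioo (0:ℝ) 1,
      Real.log ‖(fun i => (t : ℂ) ^ (w i) * v i : ι → ℂ)‖ / Real.log t
        = S.inf' hne (fun i => (w i : ℝ) + Real.log ‖v i‖ / Real.log t) := by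
    intro t ht
    obtain ⟨ht0, ht1⟩ := ht
    have hlogt : Real.log t < 0 := Real.log_neg ht0 ht1
    have hpos : ∀ i ∈ S, 0 < t ^ (w i) * ‖v i‖ := fun i hi =>
      mul_pos (zpow_pos ht0 _) (norm_pos_iff.mpr (hv i hi))
    have hni : ∀ i, ‖(t : ℂ) ^ (w i) * v i‖ = t ^ (w i) * ‖v i‖ := by
      intro i
      rw [norm_mul, norm_zpow, Complex.norm_real, Real.norm_eq_abs, abs_of_pos ht0]
    have hnorm : ‖(fun i => (t : ℂ) ^ (w i) * v i : ι → ℂ)‖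
        = S.sup' hne (fun i => t ^ (w i) * ‖v i‖) := by
      apply le_antisymm
      · rw [pi_norm_le_iff_of_nonneg]
        · intro i
          rw [hni i]
          by_cases hvi : v i = 0
          · simp only [hvi, norm_zero, mul_zero]
            exact le_of_lt (lt_of_lt_of_le (hpos _ hne.choose_spec)
              (Finset.le_sup' (fun i => t ^ (w i) * ‖v i‖) hne.choose_spec))
          · exact Finset.le_sup' (fun i => t ^ (w i) * ‖v i‖)
              (Finset.mem_filter.mpr ⟨Finset.mem_univ i, hvi⟩)
        · obtain ⟨i, hi⟩ := hne
          exact le_trans (le_of_lt (hpos i hi)) (Finset.le_sup' (fun i => t ^ (w i) * ‖v i‖) hi)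
      · obtain ⟨i, hi, hieq⟩ := Finset.exists_mem_eq_sup' hne (fun i => t ^ (w i) * ‖v i‖)
        rw [hieq, ← hni i]
        exact norm_le_pi_norm (fun i => (t : ℂ) ^ (w i) * v i) i
    rw [hnorm]
    obtain ⟨i₀, hi₀, hi₀eq⟩ := Finset.exists_mem_eq_sup' hne (fun i => t ^ (w i) * ‖v i‖)
    have hlog : Real.log (S.sup' hne (fun i => t ^ (w i) * ‖v i‖))
        = S.sup' hne (fun i => (w i : ℝ) * Real.log t + Real.log ‖v i‖) := by
      have hterm : ∀ i ∈ S, Real.log (t ^ (w i) * ‖v i‖)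
          = (w i : ℝ) * Real.log t + Real.log ‖v i‖ := by
        intro i hi
        rw [Real.log_mul (ne_of_gt (zpow_pos ht0 _)) (norm_ne_zero_iff.mpr (hv i hi)),
          Real.log_zpow]
      apply le_antisymm
      · rw [hi₀eq, hterm i₀ hi₀]
        exact Finset.le_sup' (fun i => (w i : ℝ) * Real.log t + Real.log ‖v i‖) hi₀
      · apply Finset.sup'_le
        intro i hi
        rw [← hterm i hi]
        exact Real.log_le_log (hpos i hi) (Finset.le_sup' (fun i => t ^ (w i) * ‖v i‖) hi)
    rw [hlog]
    -- divide sup' by negative log t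
    obtain ⟨j, hj, hjeq⟩ := Finset.exists_mem_eq_sup' hne
      (fun i => (w i : ℝ) * Real.log t + Real.log ‖v i‖)
    apply le_antisymm
    · apply Finset.le_inf'
      intro i hi
      rw [div_le_iff_of_neg hlogt, add_mul, div_mul_cancel₀ _ (ne_of_lt hlogt)]
      exact Finset.le_sup' (fun i => (w i : ℝ) * Real.log t + Real.log ‖v i‖) hi
    · have heq : (S.sup' hne (fun i => (w i : ℝ) * Real.log t + Real.log ‖v i‖)) / Real.log t
          = (w j : ℝ) + Real.log ‖v j‖ / Real.log t := by
        rw [hjeq, add_div, mul_div_cancel_right₀ _ (ne_of_lt hlogt)]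
      rw [heq]
      exact Finset.inf'_le (fun i => (w i : ℝ) + Real.log ‖v i‖ / Real.log t) hj
  have hmem : Ioo (0:ℝ) 1 ∈ nhdsWithin (0:ℝ) (Ioi 0) :=
    Ioo_mem_nhdsGT_of_mem (by simp [zero_lt_one] : (0:ℝ) ∈ Ico (0:ℝ) 1)
  refine Tendsto.congr' (Filter.eventuallyEq_of_mem hmem fun t ht => (key t ht).symm) ?_
  apply tendsto_finset_inf'
  intro i _
  have hinv : Tendsto (fun t : ℝ => (Real.log t)⁻¹) (nhdsWithin 0 (Ioi 0)) (nhds 0) := by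
    have h1 : Tendsto (fun t : ℝ => -Real.log t) (nhdsWithin 0 (Ioi 0)) atTop :=
      tendsto_neg_atBot_atTop.comp Real.tendsto_log_nhdsGT_zero
    have h2 := h1.inv_tendsto_atTop
    have : Tendsto (fun t : ℝ => -(-Real.log t)⁻¹) (nhdsWithin 0 (Ioi 0)) (nhds (-0)) :=
      h2.neg
    simpa [inv_neg] using this
  have : Tendsto (fun t : ℝ => (w i : ℝ) + Real.log ‖v i‖ * (Real.log t)⁻¹)
      (nhdsWithin 0 (Ioi 0)) (nhds ((w i : ℝ) + Real.log ‖v i‖ * 0)) :=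
    tendsto_const_nhds.add (tendsto_const_nhds.mul hinv)
  simpa [div_eq_mul_inv] using this
end

section
/- Let m ≥ 1, let u_1 ≥ u_2 ≥ … ≥ u_m be real numbers, and let b_{ij} (1 ≤ i, j ≤ m) be nonnegative real numbers with b_{ij} = b_{ji}. Then ∑_{i=1}^m ∑_{j=i+1}^m (u_i − u_j) · b_{ij} ≤ 2^{m−1} · ∑_{i=1}^m |∑_{j=1}^m (u_i − u_j) · b_{ij}|. -/
/-- The bridging step in the proof of Lemma 8.4: if `u 1 ≥ u 2 ≥ … ≥ u m` are
reals and `b i j = b j i ≥ 0`, then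
`∑_i ∑_{j>i} (u i - u j) * b i j ≤ 2^(m-1) ∑_i |∑_j (u i - u j) * b i j|`. -/
theorem stmt_15 (m : ℕ) (hm : 1 ≤ m) (u : Fin m → ℝ)
    (hu : ∀ i j : Fin m, i ≤ j → u j ≤ u i)
    (b : Fin m → Fin m → ℝ) (hb : ∀ i j, 0 ≤ b i j)
    (hsymm : ∀ i j, b i j = b j i) :
    ∑ i : Fin m, ∑ j ∈ Finset.Ioi i, (u i - u j) * b i j ≤
      (2 : ℝ) ^ (m - 1) * ∑ i : Fin m, |∑ j : Fin m, (u i - u j) * b i j| := by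
  set s : Fin m → Fin m → ℝ := fun i j => (u i - u j) * b i j with hs
  have hskew : ∀ i j, s j i = - s i j := by
    intro i j
    simp only [hs]
    rw [hsymm j i]
    ring
  have hnn : ∀ i j : Fin m, i ≤ j → 0 ≤ s i j := fun i j hij =>
    mul_nonneg (sub_nonneg.2 (hu i j hij)) (hb i j)
  have habs_nonneg : 0 ≤ ∑ i : Fin m, |∑ j : Fin m, s i j| :=
    Finset.sum_nonneg fun i _ => abs_nonneg _
  have key : ∀ i : Fin m, ∑ j ∈ Finset.Ioi i, s i j ≤ ∑ i' : Fin m, |∑ j : Fin m, s i' j| := by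
    intro i
    have h1 : ∑ j ∈ Finset.Ioi i, s i j ≤ ∑ i' ∈ Finset.Iic i, ∑ j ∈ Finset.Ioi i, s i' j := by
      have he : ∑ j ∈ Finset.Ioi i, s i j = ∑ i' ∈ {i}, ∑ j ∈ Finset.Ioi i, s i' j := by simp
      rw [he]
      apply Finset.sum_le_sum_of_subset_of_nonneg
      · intro x hx
        simp only [Finset.mem_singleton] at hx
        simp [hx]
      · intro i' hi' _
        exact Finset.sum_nonneg fun j hj =>
          hnn i' j (le_of_lt (lt_of_le_of_lt (Finset.mem_Iic.1 hi') (Finset.mem_Ioi.1 hj)))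
    have hzero : ∑ i' ∈ Finset.Iic i, ∑ j ∈ Finset.Iic i, s i' j = 0 := by
      have hc : ∑ i' ∈ Finset.Iic i, ∑ j ∈ Finset.Iic i, s i' j
          = ∑ j ∈ Finset.Iic i, ∑ i' ∈ Finset.Iic i, s i' j := Finset.sum_comm
      have hneg : ∑ j ∈ Finset.Iic i, ∑ i' ∈ Finset.Iic i, s i' j
          = - ∑ i' ∈ Finset.Iic i, ∑ j ∈ Finset.Iic i, s i' j := by
        rw [← Finset.sum_neg_distrib]
        apply Finset.sum_congr rfl
        intro j _
        rw [← Finset.sum_neg_distrib]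
        apply Finset.sum_congr rfl
        intro i' _
        rw [hskew]
      linarith [hc, hneg]
    have h3 : ∑ i' ∈ Finset.Iic i, ∑ j ∈ Finset.Ioi i, s i' j
        = ∑ i' ∈ Finset.Iic i, ∑ j : Fin m, s i' j := by
      have : ∀ i' : Fin m, ∑ j : Fin m, s i' j
          = ∑ j ∈ Finset.Iic i, s i' j + ∑ j ∈ Finset.Ioi i, s i' j := by
        intro i'
        have hcompl : (Finset.Iic i)ᶜ = Finset.Ioi i := by
          ext x
          simp [Finset.mem_compl, not_le]
        rw [← hcompl, Finset.sum_add_sum_compl]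
      rw [Finset.sum_congr rfl fun i' _ => this i', Finset.sum_add_distrib, hzero, zero_add]
    calc ∑ j ∈ Finset.Ioi i, s i j
        ≤ ∑ i' ∈ Finset.Iic i, ∑ j ∈ Finset.Ioi i, s i' j := h1
      _ = ∑ i' ∈ Finset.Iic i, ∑ j : Fin m, s i' j := h3
      _ ≤ ∑ i' ∈ Finset.Iic i, |∑ j : Fin m, s i' j| :=
          Finset.sum_le_sum fun i' _ => le_abs_self _
      _ ≤ ∑ i' : Fin m, |∑ j : Fin m, s i' j| :=
          Finset.sum_le_sum_of_subset_of_nonneg (Finset.subset_univ _)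
            (fun _ _ _ => abs_nonneg _)
  have hm2 : (m : ℝ) ≤ (2 : ℝ) ^ (m - 1) := by
    have h : m ≤ 2 ^ (m - 1) := by
      have : m - 1 < 2 ^ (m - 1) := Nat.lt_two_pow_self
      omega
    calc (m : ℝ) ≤ ((2 ^ (m - 1) : ℕ) : ℝ) := by exact_mod_cast h
      _ = (2 : ℝ) ^ (m - 1) := by push_cast; ring
  calc ∑ i : Fin m, ∑ j ∈ Finset.Ioi i, s i j
      ≤ ∑ _i : Fin m, (∑ i' : Fin m, |∑ j : Fin m, s i' j|) :=
        Finset.sum_le_sum fun i _ => key i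
    _ = (m : ℝ) * ∑ i : Fin m, |∑ j : Fin m, s i j| := by
        rw [Finset.sum_const, Finset.card_univ, Fintype.card_fin, nsmul_eq_mul]
    _ ≤ (2 : ℝ) ^ (m - 1) * ∑ i : Fin m, |∑ j : Fin m, s i j| :=
        mul_le_mul_of_nonneg_right hm2 habs_nonneg
end
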